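/- arXiv:1401.0557 — 6 statements merged into one kernel-verified Lean document; each statement's English description precedes it below -/
import Mathlib

section
/- Let α < α' be real numbers and let k = (k^{(n)})_{n≥0} satisfy ‖k‖_{α'} < ∞. Then the sequence Bk satisfies ‖Bk‖_α ≤ (1/(e(α'−α))) (⟨a⁻⟩ e^{−α'} + ⟨a⁺⟩) ‖k‖_{α'}; moreover ‖A₀k‖_α ≤ (m/(e(α'−α))) ‖k‖_{α'}. In particular, both A₀ and B define bounded linear operators from K_{α'} to K_α. -/
open MeasureTheory Filter Set Topology
open scoped ENNReal

noncomputable section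

abbrev Rd (d : ℕ) := Fin d → ℝ

/-- sequences `k = (k^{(n)})_{n ≥ 0}` of functions on finite configurations -/
abbrev CorrSeq (d : ℕ) := (n : ℕ) → (Fin n → Rd d) → ℝ

/-- the norm `‖k‖_α = sup_n e^{nα} ‖k^{(n)}‖_{L^∞}`, with values in `ℝ≥0∞`. -/
def knorm {d : ℕ} (α : ℝ) (k : CorrSeq d) : ℝ≥0∞ :=
  ⨆ n : ℕ, ENNReal.ofReal (Real.exp (n * α)) * eLpNorm (k n) ⊤ volume

/-- each component is measurable, essentially bounded and symmetric -/
def IsCorrFun {d : ℕ} (k : CorrSeq d) : Prop :=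
  ∀ n : ℕ, AEStronglyMeasurable (k n) volume ∧ eLpNorm (k n) ⊤ volume < ⊤ ∧
    ∀ (σ : Equiv.Perm (Fin n)) (x : Fin n → Rd d), k n (x ∘ σ) = k n x

/-- `(A₀k)^{(n)} = -mn k^{(n)}` -/
def A0 {d : ℕ} (m : ℝ) (k : CorrSeq d) : CorrSeq d :=
  fun n x => -(m * n) * k n x

/-- the operator `B` -/
def Bop {d : ℕ} (ap am : Rd d → ℝ) (k : CorrSeq d) : CorrSeq d :=
  fun n x =>
    (- ∫ y : Rd d, (∑ i, am (y - x i)) * k (n + 1) (Fin.snoc x y))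
      + ∑ i, ∫ y : Rd d, ap (x i - y) * k n (Function.update x i y)

/-- the operator `C` -/
def Cop {d : ℕ} (ap am : Rd d → ℝ) (k : CorrSeq d) : CorrSeq d :=
  fun n => match n with
  | 0 => fun _ => 0
  | n + 1 => fun x =>
      (-(∑ i, ∑ j ∈ Finset.univ.erase i, am (x i - x j))) * k (n + 1) x
        + ∑ i : Fin (n + 1),
            (∑ j ∈ Finset.univ.erase i, ap (x i - x j)) * k n (x ∘ i.succAbove)

lemma aux_exp {c : ℝ} (hc : 0 < c) (n : ℕ) :
    (n : ℝ) * Real.exp (-((n : ℝ) * c)) ≤ 1 / (Real.exp 1 * c) := by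
  have h1 : (n : ℝ) * c ≤ Real.exp ((n : ℝ) * c - 1) := by
    have := Real.add_one_le_exp ((n : ℝ) * c - 1); linarith
  rw [le_div_iff₀ (by positivity)]
  have h2 : (n : ℝ) * Real.exp (-((n : ℝ) * c)) * (Real.exp 1 * c)
      = ((n : ℝ) * c) * (Real.exp (-((n : ℝ) * c)) * Real.exp 1) := by ring
  rw [h2]
  calc ((n : ℝ) * c) * (Real.exp (-((n : ℝ) * c)) * Real.exp 1)
      ≤ Real.exp ((n : ℝ) * c - 1) * (Real.exp (-((n : ℝ) * c)) * Real.exp 1) := by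
        apply mul_le_mul_of_nonneg_right h1 (by positivity)
    _ = 1 := by
        rw [← Real.exp_add, ← Real.exp_add]
        norm_num

lemma ae_slice_insertNth {d n : ℕ} (i : Fin (n + 1)) (P : (Fin (n + 1) → Rd d) → Prop)
    (h : ∀ᵐ z ∂(volume : Measure (Fin (n + 1) → Rd d)), P z) :
    ∀ᵐ x ∂(volume : Measure (Fin n → Rd d)), ∀ᵐ y ∂(volume : Measure (Rd d)),
      P (i.insertNth y x) := by
  have e := (MeasureTheory.volume_preserving_piFinSuccAbove (fun _ : Fin (n + 1) => Rd d) i).symm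
  have h2 : ∀ᵐ p ∂(volume : Measure (Rd d × (Fin n → Rd d))),
      P (i.insertNth p.1 p.2) := by
    have := e.quasiMeasurePreserving.ae h
    simpa [MeasurableEquiv.piFinSuccAbove, Fin.insertNthEquiv] using this
  rw [Measure.volume_eq_prod] at h2
  have h3 : ∀ᵐ q ∂((volume : Measure (Fin n → Rd d)).prod (volume : Measure (Rd d))),
      P (i.insertNth q.2 q.1) :=
    Measure.measurePreserving_swap.quasiMeasurePreserving.ae h2
  exact Measure.ae_ae_of_ae_prod h3

lemma ae_slice_update {d n : ℕ} (i : Fin (n + 1)) (P : (Fin (n + 1) → Rd d) → Prop)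
    (h : ∀ᵐ z ∂(volume : Measure (Fin (n + 1) → Rd d)), P z) :
    ∀ᵐ x ∂(volume : Measure (Fin (n + 1) → Rd d)), ∀ᵐ y ∂(volume : Measure (Rd d)),
      P (Function.update x i y) := by
  have h1 := ae_slice_insertNth i P h
  have q : Measure.QuasiMeasurePreserving (fun x : Fin (n + 1) → Rd d => i.removeNth x)
      volume volume := by
    have e := MeasureTheory.volume_preserving_piFinSuccAbove (fun _ : Fin (n + 1) => Rd d) i
    have hsnd : Measure.QuasiMeasurePreserving (Prod.snd)
        (volume : Measure (Rd d × (Fin n → Rd d))) volume := by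
      rw [Measure.volume_eq_prod]; exact Measure.quasiMeasurePreserving_snd
    have heq : (fun x : Fin (n + 1) → Rd d => i.removeNth x)
        = Prod.snd ∘ (MeasurableEquiv.piFinSuccAbove (fun _ => Rd d) i) := by
      funext x
      simp [MeasurableEquiv.piFinSuccAbove, Fin.insertNthEquiv, Fin.removeNth]
    rw [heq]
    exact hsnd.comp e.quasiMeasurePreserving
  have h2 := q.ae h1
  filter_upwards [h2] with x hx
  filter_upwards [hx] with y hy
  rwa [Fin.insertNth_removeNth] at hy

theorem statement3
    (d : ℕ) (hd : 1 ≤ d) (m : ℝ) (hm : 0 ≤ m)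
    (aplus aminus : Rd d → ℝ)
    (hap_int : Integrable aplus volume) (ham_int : Integrable aminus volume)
    (hap_bdd : eLpNorm aplus ⊤ volume < ⊤) (ham_bdd : eLpNorm aminus ⊤ volume < ⊤)
    (hap_even : ∀ᵐ x ∂volume, aplus (-x) = aplus x)
    (ham_even : ∀ᵐ x ∂volume, aminus (-x) = aminus x)
    (hap_pos : ∀ᵐ x ∂volume, 0 ≤ aplus x)
    (ham_pos : ∀ᵐ x ∂volume, 0 ≤ aminus x)
    (α α' : ℝ) (hαα : α < α')
    (k : CorrSeq d) (hk : IsCorrFun k) (hkK : knorm α' k < ⊤) :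
    knorm α (Bop aplus aminus k) ≤
        ENNReal.ofReal ((1 / (Real.exp 1 * (α' - α))) *
          ((∫ x, aminus x) * Real.exp (-α') + ∫ x, aplus x)) * knorm α' k ∧
      knorm α (A0 m k) ≤
        ENNReal.ofReal (m / (Real.exp 1 * (α' - α))) * knorm α' k := by
  set c : ℝ := α' - α with hc_def
  have hc : 0 < c := sub_pos.mpr hαα
  set M : ℝ≥0∞ := knorm α' k with hM_def
  have hMne : M ≠ ⊤ := hkK.ne
  set T : ℝ := M.toReal with hT_def
  have hT : 0 ≤ T := ENNReal.toReal_nonneg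
  set Iam : ℝ := ∫ x, aminus x with hIam_def
  set Iap : ℝ := ∫ x, aplus x with hIap_def
  have hIam : 0 ≤ Iam := integral_nonneg_of_ae ham_pos
  have hIap : 0 ≤ Iap := integral_nonneg_of_ae hap_pos
  set Cr : ℕ → ℝ := fun n => (eLpNorm (k n) ⊤ volume).toReal with hCr_def
  have hCr0 : ∀ n, 0 ≤ Cr n := fun n => ENNReal.toReal_nonneg
  have hCreq : ∀ n, eLpNorm (k n) ⊤ volume = ENNReal.ofReal (Cr n) := fun n =>
    (ENNReal.ofReal_toReal (hk n).2.1.ne).symm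
  -- the basic norm bound e^{nα'} Cr n ≤ T
  have hCrle : ∀ n : ℕ, Real.exp (n * α') * Cr n ≤ T := by
    intro n
    have h1 : ENNReal.ofReal (Real.exp (n * α')) * eLpNorm (k n) ⊤ volume ≤ M := by
      rw [hM_def, knorm]
      exact le_iSup (fun n : ℕ => ENNReal.ofReal (Real.exp (n * α')) * eLpNorm (k n) ⊤ volume) n
    have h2 := ENNReal.toReal_mono hMne h1
    rwa [ENNReal.toReal_mul, ENNReal.toReal_ofReal (Real.exp_nonneg _)] at h2
  have hCrle' : ∀ n : ℕ, Cr n ≤ Real.exp (-(n * α')) * T := by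
    intro n
    have := mul_le_mul_of_nonneg_left (hCrle n) (Real.exp_nonneg (-(n * α')))
    calc Cr n = Real.exp (-(n * α')) * (Real.exp (n * α') * Cr n) := by
          rw [← mul_assoc, ← Real.exp_add]; simp
      _ ≤ Real.exp (-(n * α')) * T := this
  -- a.e. bound on k n
  have hbd : ∀ n, ∀ᵐ z ∂(volume : Measure (Fin n → Rd d)), ‖k n z‖ ≤ Cr n := by
    intro n
    filter_upwards [enorm_ae_le_eLpNormEssSup (k n) volume] with z hz
    have h1 : (‖k n z‖₊ : ℝ≥0∞) ≤ eLpNorm (k n) ⊤ volume := by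
      rwa [eLpNorm_exponent_top]
    have h2 := ENNReal.toReal_mono (hk n).2.1.ne h1
    simpa [hCr_def] using h2
  -- a.e. bound on Bop
  have hBbd : ∀ n : ℕ, ∀ᵐ x ∂(volume : Measure (Fin n → Rd d)),
      ‖Bop aplus aminus k n x‖ ≤ n * (Iam * Cr (n + 1) + Iap * Cr n) := by
    intro n
    have hsnoc : ∀ᵐ x ∂(volume : Measure (Fin n → Rd d)), ∀ᵐ y ∂(volume : Measure (Rd d)),
        ‖k (n + 1) (Fin.snoc x y)‖ ≤ Cr (n + 1) := by
      have := ae_slice_insertNth (d := d) (Fin.last n)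
        (fun z => ‖k (n + 1) z‖ ≤ Cr (n + 1)) (hbd (n + 1))
      filter_upwards [this] with x hx
      filter_upwards [hx] with y hy
      rwa [Fin.insertNth_last'] at hy
    have hupd : ∀ᵐ x ∂(volume : Measure (Fin n → Rd d)), ∀ i : Fin n,
        ∀ᵐ y ∂(volume : Measure (Rd d)), ‖k n (Function.update x i y)‖ ≤ Cr n := by
      rw [MeasureTheory.ae_all_iff]
      intro i
      cases n with
      | zero => exact i.elim0
      | succ p => exact ae_slice_update i (fun z => ‖k (p + 1) z‖ ≤ Cr (p + 1)) (hbd (p + 1))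
    filter_upwards [hsnoc, hupd] with x hx1 hx2
    have hterm1 : ‖∫ y : Rd d, (∑ i, aminus (y - x i)) * k (n + 1) (Fin.snoc x y)‖
        ≤ n * (Iam * Cr (n + 1)) := by
      refine (norm_integral_le_integral_norm _).trans ?_
      have hgint : Integrable (fun y : Rd d => (∑ i, ‖aminus (y - x i)‖) * Cr (n + 1)) volume := by
        apply Integrable.mul_const
        exact integrable_finset_sum _ fun i _ => ham_int.norm.comp_sub_right (x i)
      have hmono : (fun y : Rd d => ‖(∑ i, aminus (y - x i)) * k (n + 1) (Fin.snoc x y)‖)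
          ≤ᵐ[volume] fun y => (∑ i, ‖aminus (y - x i)‖) * Cr (n + 1) := by
        filter_upwards [hx1] with y hy
        rw [norm_mul]
        exact mul_le_mul (norm_sum_le _ _) hy (norm_nonneg _)
          (Finset.sum_nonneg fun i _ => norm_nonneg _)
      refine (integral_mono_of_nonneg (Eventually.of_forall fun y => norm_nonneg _)
        hgint hmono).trans ?_
      rw [integral_mul_const, integral_finset_sum _
        (fun i _ => ham_int.norm.comp_sub_right (x i))]
      have hint_i : ∀ i : Fin n, (∫ y : Rd d, ‖aminus (y - x i)‖) = Iam := by
        intro i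
        rw [integral_sub_right_eq_self (fun y => ‖aminus y‖) (x i)]
        refine integral_congr_ae ?_
        filter_upwards [ham_pos] with z hz
        rw [Real.norm_eq_abs, abs_of_nonneg hz]
      rw [Finset.sum_congr rfl fun i _ => hint_i i]
      simp [mul_assoc]
    have hterm2 : ∀ i : Fin n, ‖∫ y : Rd d, aplus (x i - y) * k n (Function.update x i y)‖
        ≤ Iap * Cr n := by
      intro i
      refine (norm_integral_le_integral_norm _).trans ?_
      have hgint : Integrable (fun y : Rd d => ‖aplus (x i - y)‖ * Cr n) volume :=
        (hap_int.norm.comp_sub_left (x i)).mul_const _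
      have hmono : (fun y : Rd d => ‖aplus (x i - y) * k n (Function.update x i y)‖)
          ≤ᵐ[volume] fun y => ‖aplus (x i - y)‖ * Cr n := by
        filter_upwards [hx2 i] with y hy
        rw [norm_mul]
        exact mul_le_mul_of_nonneg_left hy (norm_nonneg _)
      refine (integral_mono_of_nonneg (Eventually.of_forall fun y => norm_nonneg _)
        hgint hmono).trans ?_
      rw [integral_mul_const, integral_sub_left_eq_self (fun y => ‖aplus y‖) volume (x i)]
      have : (∫ y : Rd d, ‖aplus y‖) = Iap := by
        refine integral_congr_ae ?_
        filter_upwards [hap_pos] with z hz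
        rw [Real.norm_eq_abs, abs_of_nonneg hz]
      rw [this]
    calc ‖Bop aplus aminus k n x‖
        ≤ ‖∫ y : Rd d, (∑ i, aminus (y - x i)) * k (n + 1) (Fin.snoc x y)‖
          + ∑ i, ‖∫ y : Rd d, aplus (x i - y) * k n (Function.update x i y)‖ := by
          rw [Bop]
          refine (norm_add_le _ _).trans ?_
          rw [norm_neg]
          exact add_le_add_right (norm_sum_le _ _) _
      _ ≤ n * (Iam * Cr (n + 1)) + ∑ _i : Fin n, Iap * Cr n :=
          add_le_add hterm1 (Finset.sum_le_sum fun i _ => hterm2 i)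
      _ = n * (Iam * Cr (n + 1) + Iap * Cr n) := by
          simp [Finset.sum_const]; ring
  constructor
  · -- B part
    rw [knorm]
    refine iSup_le fun n => ?_
    have hsn : eLpNorm (Bop aplus aminus k n) ⊤ volume
        ≤ ENNReal.ofReal (n * (Iam * Cr (n + 1) + Iap * Cr n)) := by
      rw [eLpNorm_exponent_top]
      exact eLpNormEssSup_le_of_ae_bound (hBbd n)
    have hreal : Real.exp (n * α) * (n * (Iam * Cr (n + 1) + Iap * Cr n))
        ≤ ((1 / (Real.exp 1 * c)) * (Iam * Real.exp (-α') + Iap)) * T := by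
      have e1 : Real.exp (n * α) * Real.exp (-(((n : ℝ) + 1) * α'))
          = Real.exp (-((n : ℝ) * c)) * Real.exp (-α') := by
        rw [← Real.exp_add, ← Real.exp_add]
        congr 1
        rw [hc_def]; ring
      have e2 : Real.exp (n * α) * Real.exp (-((n : ℝ) * α'))
          = Real.exp (-((n : ℝ) * c)) := by
        rw [← Real.exp_add]
        congr 1
        rw [hc_def]; ring
      have b1 : Real.exp (n * α) * Cr (n + 1)
          ≤ Real.exp (-((n : ℝ) * c)) * Real.exp (-α') * T := by
        calc Real.exp (n * α) * Cr (n + 1)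
            ≤ Real.exp (n * α) * (Real.exp (-(((n : ℝ) + 1) * α')) * T) := by
              have := hCrle' (n + 1)
              push_cast at this ⊢
              exact mul_le_mul_of_nonneg_left this (Real.exp_nonneg _)
          _ = Real.exp (-((n : ℝ) * c)) * Real.exp (-α') * T := by rw [← mul_assoc, e1]
      have b2 : Real.exp (n * α) * Cr n ≤ Real.exp (-((n : ℝ) * c)) * T := by
        calc Real.exp (n * α) * Cr n
            ≤ Real.exp (n * α) * (Real.exp (-((n : ℝ) * α')) * T) :=
              mul_le_mul_of_nonneg_left (hCrle' n) (Real.exp_nonneg _)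
          _ = Real.exp (-((n : ℝ) * c)) * T := by rw [← mul_assoc, e2]
      calc Real.exp (n * α) * (n * (Iam * Cr (n + 1) + Iap * Cr n))
          = (n : ℝ) * (Iam * (Real.exp (n * α) * Cr (n + 1))
            + Iap * (Real.exp (n * α) * Cr n)) := by ring
        _ ≤ (n : ℝ) * (Iam * (Real.exp (-((n : ℝ) * c)) * Real.exp (-α') * T)
            + Iap * (Real.exp (-((n : ℝ) * c)) * T)) := by
            have hn : (0 : ℝ) ≤ n := n.cast_nonneg
            apply mul_le_mul_of_nonneg_left _ hn
            exact add_le_add (mul_le_mul_of_nonneg_left b1 hIam)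
              (mul_le_mul_of_nonneg_left b2 hIap)
        _ = ((n : ℝ) * Real.exp (-((n : ℝ) * c))) * ((Iam * Real.exp (-α') + Iap) * T) := by
            ring
        _ ≤ (1 / (Real.exp 1 * c)) * ((Iam * Real.exp (-α') + Iap) * T) := by
            apply mul_le_mul_of_nonneg_right (aux_exp hc n)
            positivity
        _ = ((1 / (Real.exp 1 * c)) * (Iam * Real.exp (-α') + Iap)) * T := by ring
    calc ENNReal.ofReal (Real.exp (n * α)) * eLpNorm (Bop aplus aminus k n) ⊤ volume
        ≤ ENNReal.ofReal (Real.exp (n * α))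
          * ENNReal.ofReal (n * (Iam * Cr (n + 1) + Iap * Cr n)) :=
          mul_le_mul_right hsn _
      _ = ENNReal.ofReal (Real.exp (n * α) * (n * (Iam * Cr (n + 1) + Iap * Cr n))) :=
          (ENNReal.ofReal_mul (Real.exp_nonneg _)).symm
      _ ≤ ENNReal.ofReal (((1 / (Real.exp 1 * c)) * (Iam * Real.exp (-α') + Iap)) * T) :=
          ENNReal.ofReal_le_ofReal hreal
      _ = ENNReal.ofReal ((1 / (Real.exp 1 * c)) * (Iam * Real.exp (-α') + Iap))
          * ENNReal.ofReal T := by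
          rw [ENNReal.ofReal_mul]
          positivity
      _ = ENNReal.ofReal ((1 / (Real.exp 1 * c)) * (Iam * Real.exp (-α') + Iap)) * M := by
          rw [hT_def, ENNReal.ofReal_toReal hMne]
  · -- A0 part
    rw [knorm]
    refine iSup_le fun n => ?_
    have hsmul : eLpNorm (A0 m k n) ⊤ volume
        = ENNReal.ofReal (m * n) * eLpNorm (k n) ⊤ volume := by
      have : A0 m k n = (-(m * (n : ℝ))) • (k n) := by
        funext x; simp [A0, smul_eq_mul]
      rw [this, eLpNorm_const_smul]
      congr 1
      rw [enorm_neg]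
      exact Real.enorm_eq_ofReal (by positivity)
    have hreal : Real.exp (n * α) * (m * n * Cr n) ≤ (m / (Real.exp 1 * c)) * T := by
      have e2 : Real.exp (n * α) * Real.exp (-((n : ℝ) * α'))
          = Real.exp (-((n : ℝ) * c)) := by
        rw [← Real.exp_add]; congr 1; rw [hc_def]; ring
      have b2 : Real.exp (n * α) * Cr n ≤ Real.exp (-((n : ℝ) * c)) * T := by
        calc Real.exp (n * α) * Cr n
            ≤ Real.exp (n * α) * (Real.exp (-((n : ℝ) * α')) * T) :=
              mul_le_mul_of_nonneg_left (hCrle' n) (Real.exp_nonneg _)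
          _ = Real.exp (-((n : ℝ) * c)) * T := by rw [← mul_assoc, e2]
      calc Real.exp (n * α) * (m * n * Cr n)
          = m * ((n : ℝ) * (Real.exp (n * α) * Cr n)) := by ring
        _ ≤ m * ((n : ℝ) * (Real.exp (-((n : ℝ) * c)) * T)) := by
            apply mul_le_mul_of_nonneg_left _ hm
            exact mul_le_mul_of_nonneg_left b2 (n.cast_nonneg)
        _ = m * (((n : ℝ) * Real.exp (-((n : ℝ) * c))) * T) := by ring
        _ ≤ m * ((1 / (Real.exp 1 * c)) * T) := by
            apply mul_le_mul_of_nonneg_left _ hm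
            exact mul_le_mul_of_nonneg_right (aux_exp hc n) hT
        _ = (m / (Real.exp 1 * c)) * T := by ring
    calc ENNReal.ofReal (Real.exp (n * α)) * eLpNorm (A0 m k n) ⊤ volume
        = ENNReal.ofReal (Real.exp (n * α)) * (ENNReal.ofReal (m * n)
          * ENNReal.ofReal (Cr n)) := by rw [hsmul, hCreq n]
      _ = ENNReal.ofReal (Real.exp (n * α) * (m * n * Cr n)) := by
          rw [← ENNReal.ofReal_mul (by positivity), ← ENNReal.ofReal_mul (by positivity)]
      _ ≤ ENNReal.ofReal ((m / (Real.exp 1 * c)) * T) := ENNReal.ofReal_le_ofReal hreal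
      _ = ENNReal.ofReal (m / (Real.exp 1 * c)) * ENNReal.ofReal T := by
          rw [ENNReal.ofReal_mul (by positivity)]
      _ = ENNReal.ofReal (m / (Real.exp 1 * c)) * M := by
          rw [hT_def, ENNReal.ofReal_toReal hMne]
end
end

section
/- Let α < α' be real numbers and let k = (k^{(n)})_{n≥0} satisfy ‖k‖_{α'} < ∞. Then for each n ≥ 0, |(Ck)^{(n)}(x₁,…,xₙ)| ≤ n² e^{−(α'−α)n} (‖a⁻‖ + ‖a⁺‖ e^{α'}) ‖k‖_{α'} e^{−αn} for a.e. (x₁,…,xₙ), and consequently ‖Ck‖_α ≤ (2/(e(α'−α)))² (‖a⁻‖ + ‖a⁺‖ e^{α'}) ‖k‖_{α'}; in particular C defines a bounded linear operator from K_{α'} to K_α. -/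
open MeasureTheory Filter Set Topology
open scoped ENNReal

noncomputable section

/-! ### auxiliary lemmas -/

lemma qmp_comp_inj {d : ℕ} {ι ι' : Type} [Fintype ι] [Fintype ι'] (g : ι' → ι)
    (hg : Function.Injective g) :
    Measure.QuasiMeasurePreserving (fun x : ι → Rd d => x ∘ g) volume volume := by
  classical
  have e1 := volume_preserving_piEquivPiSubtypeProd (fun _ : ι => Rd d)
    (fun i => i ∈ Set.range g)
  have e2 := (@volume_measurePreserving_piCongrLeft {i : ι // i ∈ Set.range g} ι'
    (Subtype.fintype _) _ (fun _ => Rd d) (Equiv.ofInjective g hg) _ _).symm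
  have h2 := Measure.quasiMeasurePreserving_fst.comp e1.quasiMeasurePreserving
  have h3 := e2.quasiMeasurePreserving.comp h2
  convert h3 using 1
  · rfl
  · funext x; rfl

lemma qmp_sub_pair {d N : ℕ} {i j : Fin N} (hij : i ≠ j) :
    Measure.QuasiMeasurePreserving (fun x : Fin N → Rd d => x i - x j) volume volume := by
  have hg : Function.Injective (![i, j] : Fin 2 → Fin N) := by
    intro a b hab
    fin_cases a <;> fin_cases b <;> simp_all
  have h1 := qmp_comp_inj (d := d) _ hg
  have h2 := (volume_preserving_finTwoArrow (Rd d)).quasiMeasurePreserving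
  have h3 := (quasiMeasurePreserving_sub (volume : Measure (Rd d)) volume)
  have := (h3.comp h2).comp h1
  convert this using 1
  funext x; rfl

lemma ae_abs_le_toReal {β : Type*} [MeasurableSpace β] {ν : Measure β} {f : β → ℝ}
    (hf : eLpNorm f ⊤ ν ≠ ⊤) : ∀ᵐ y ∂ν, |f y| ≤ (eLpNorm f ⊤ ν).toReal := by
  have h := MeasureTheory.ae_le_eLpNormEssSup (f := f) (μ := ν)
  rw [eLpNorm_exponent_top] at hf
  filter_upwards [h] with y hy
  have h2 : ((‖f y‖₊ : ℝ≥0∞)).toReal ≤ (eLpNormEssSup f ν).toReal :=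
    ENNReal.toReal_mono hf hy
  simpa [Real.norm_eq_abs, eLpNorm_exponent_top] using h2

lemma sq_mul_exp_neg_le (u : ℝ) (hu : 0 ≤ u) :
    u ^ 2 * Real.exp (-u) ≤ (2 / Real.exp 1) ^ 2 := by
  have h1 : u / 2 ≤ Real.exp (u / 2 - 1) := by
    have := Real.add_one_le_exp (u / 2 - 1); linarith
  have h2 : (u / 2) ^ 2 ≤ Real.exp (u / 2 - 1) ^ 2 := by
    have h0 : (0:ℝ) ≤ u / 2 := by linarith
    nlinarith [h1, h0]
  have h3 : Real.exp (u / 2 - 1) ^ 2 = Real.exp (u - 2) := by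
    rw [pow_two, ← Real.exp_add]; ring_nf
  have h4 : u ^ 2 ≤ 4 * Real.exp (u - 2) := by nlinarith [h2, h3]
  have h5 : Real.exp (u - 2) * Real.exp (-u) = Real.exp 1 ^ (-2 : ℤ) := by
    rw [← Real.exp_add]
    rw [show u - 2 + -u = -2 by ring]
    rw [← Real.exp_one_rpow (-2 : ℝ)]
    rw [← Real.rpow_intCast (Real.exp 1) (-2 : ℤ)]
    norm_num
  have hepos := Real.exp_pos (-u)
  calc u ^ 2 * Real.exp (-u) ≤ 4 * Real.exp (u - 2) * Real.exp (-u) := by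
        exact mul_le_mul_of_nonneg_right h4 hepos.le
    _ = 4 * (Real.exp 1 ^ (-2 : ℤ)) := by rw [mul_assoc, h5]
    _ = (2 / Real.exp 1) ^ 2 := by
        have he2 : Real.exp 1 ^ 2 = Real.exp 2 := by
          rw [pow_two, ← Real.exp_add]; norm_num
        rw [zpow_neg, div_pow]
        field_simp
        norm_cast
lemma nsq_exp_le (lam : ℝ) (hlam : 0 < lam) (n : ℕ) :
    (n : ℝ) ^ 2 * Real.exp (-lam * n) ≤ (2 / (Real.exp 1 * lam)) ^ 2 := by
  have hu : (0:ℝ) ≤ lam * n := by positivity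
  have h := sq_mul_exp_neg_le (lam * n) hu
  have h2 : (n : ℝ) ^ 2 * Real.exp (-lam * n)
      = ((lam * n) ^ 2 * Real.exp (-(lam * n))) / lam ^ 2 := by
    rw [show -lam * (n:ℝ) = -(lam * n) by ring]
    field_simp
  rw [h2]
  rw [show (2 / (Real.exp 1 * lam)) ^ 2 = (2 / Real.exp 1) ^ 2 / lam ^ 2 by
    rw [div_pow, div_pow, mul_pow, div_div]]
  exact div_le_div_of_nonneg_right h (by positivity) |>.trans_eq rfl

theorem statement4
    (d : ℕ) (hd : 1 ≤ d) (m : ℝ) (hm : 0 ≤ m)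
    (aplus aminus : Rd d → ℝ)
    (hap_int : Integrable aplus volume) (ham_int : Integrable aminus volume)
    (hap_bdd : eLpNorm aplus ⊤ volume < ⊤) (ham_bdd : eLpNorm aminus ⊤ volume < ⊤)
    (hap_even : ∀ᵐ x ∂volume, aplus (-x) = aplus x)
    (ham_even : ∀ᵐ x ∂volume, aminus (-x) = aminus x)
    (hap_pos : ∀ᵐ x ∂volume, 0 ≤ aplus x)
    (ham_pos : ∀ᵐ x ∂volume, 0 ≤ aminus x)
    (α α' : ℝ) (hαα : α < α')
    (k : CorrSeq d) (hk : IsCorrFun k) (hkK : knorm α' k < ⊤) :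
    (∀ n : ℕ, ∀ᵐ x ∂(volume : Measure (Fin n → Rd d)),
        |Cop aplus aminus k n x| ≤
          (n : ℝ) ^ 2 * Real.exp (-(α' - α) * n) *
            ((eLpNorm aminus ⊤ volume).toReal +
              (eLpNorm aplus ⊤ volume).toReal * Real.exp α') *
            (knorm α' k).toReal * Real.exp (-α * n)) ∧
      knorm α (Cop aplus aminus k) ≤
        ENNReal.ofReal ((2 / (Real.exp 1 * (α' - α))) ^ 2 *
            ((eLpNorm aminus ⊤ volume).toReal +
              (eLpNorm aplus ⊤ volume).toReal * Real.exp α')) * knorm α' k := by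
  set Mam := (eLpNorm aminus ⊤ volume).toReal with hMam
  set Map := (eLpNorm aplus ⊤ volume).toReal with hMap
  set K := (knorm α' k).toReal with hKdef
  have hMam0 : 0 ≤ Mam := ENNReal.toReal_nonneg
  have hMap0 : 0 ≤ Map := ENNReal.toReal_nonneg
  have hK0 : 0 ≤ K := ENNReal.toReal_nonneg
  -- bound for each component norm
  have hEn : ∀ n : ℕ, (eLpNorm (k n) ⊤ volume).toReal ≤ K * Real.exp (-(n : ℝ) * α') := by
    intro n
    have hterm : ENNReal.ofReal (Real.exp (n * α')) * eLpNorm (k n) ⊤ volume ≤ knorm α' k :=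
      le_iSup (fun n : ℕ => ENNReal.ofReal (Real.exp (n * α')) * eLpNorm (k n) ⊤ volume) n
    have h := ENNReal.toReal_mono hkK.ne hterm
    rw [ENNReal.toReal_mul, ENNReal.toReal_ofReal (Real.exp_nonneg _)] at h
    have hpos := Real.exp_pos ((n : ℝ) * α')
    have : (eLpNorm (k n) ⊤ volume).toReal ≤ K / Real.exp ((n : ℝ) * α') := by
      rw [le_div_iff₀ hpos]; linarith
    calc (eLpNorm (k n) ⊤ volume).toReal ≤ K / Real.exp ((n : ℝ) * α') := this
      _ = K * Real.exp (-(n : ℝ) * α') := by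
          rw [neg_mul, Real.exp_neg, div_eq_mul_inv]
  -- Part 1
  have part1 : ∀ n : ℕ, ∀ᵐ x ∂(volume : Measure (Fin n → Rd d)),
      |Cop aplus aminus k n x| ≤
        (n : ℝ) ^ 2 * Real.exp (-(α' - α) * n) * (Mam + Map * Real.exp α') * K *
          Real.exp (-α * n) := by
    intro n
    match n with
    | 0 =>
      filter_upwards with x
      simp [Cop]
    | (n + 1) =>
      -- a.e. facts
      have hAm : ∀ᵐ x ∂(volume : Measure (Fin (n+1) → Rd d)),
          ∀ i j : Fin (n+1), i ≠ j → |aminus (x i - x j)| ≤ Mam := by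
        rw [ae_all_iff]; intro i; rw [ae_all_iff]; intro j
        by_cases hij : i = j
        · filter_upwards with x h; exact absurd hij h
        · filter_upwards [(qmp_sub_pair (d := d) hij).ae (ae_abs_le_toReal ham_bdd.ne)]
            with x hx _
          exact hx
      have hAp : ∀ᵐ x ∂(volume : Measure (Fin (n+1) → Rd d)),
          ∀ i j : Fin (n+1), i ≠ j → |aplus (x i - x j)| ≤ Map := by
        rw [ae_all_iff]; intro i; rw [ae_all_iff]; intro j
        by_cases hij : i = j
        · filter_upwards with x h; exact absurd hij h
        · filter_upwards [(qmp_sub_pair (d := d) hij).ae (ae_abs_le_toReal hap_bdd.ne)]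
            with x hx _
          exact hx
      have hk1 : ∀ᵐ x ∂(volume : Measure (Fin (n+1) → Rd d)),
          |k (n+1) x| ≤ (eLpNorm (k (n+1)) ⊤ volume).toReal :=
        ae_abs_le_toReal (hk (n+1)).2.1.ne
      have hk0 : ∀ᵐ x ∂(volume : Measure (Fin (n+1) → Rd d)),
          ∀ i : Fin (n+1), |k n (x ∘ i.succAbove)| ≤ (eLpNorm (k n) ⊤ volume).toReal := by
        rw [ae_all_iff]; intro i
        exact (qmp_comp_inj (d := d) i.succAbove (Fin.succAbove_right_injective)).ae
          (ae_abs_le_toReal (hk n).2.1.ne)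
      filter_upwards [hAm, hAp, hk1, hk0] with x hxm hxp hx1 hx0
      have hE1 := hEn (n+1)
      have hE0 := hEn n
      set E1 := (eLpNorm (k (n+1)) ⊤ volume).toReal with hE1d
      set E0 := (eLpNorm (k n) ⊤ volume).toReal with hE0d
      have hE10 : 0 ≤ E1 := ENNReal.toReal_nonneg
      have hE00 : 0 ≤ E0 := ENNReal.toReal_nonneg
      set q : ℝ := (n : ℝ) with hq
      have hq0 : 0 ≤ q := Nat.cast_nonneg n
      have hcard : ∀ i : Fin (n+1), (Finset.univ.erase i).card = n := by
        intro i
        rw [Finset.card_erase_of_mem (Finset.mem_univ i), Finset.card_univ]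
        simp
      -- bound for the minus part
      have hS : |∑ i, ∑ j ∈ Finset.univ.erase i, aminus (x i - x j)| ≤ (q + 1) * (q * Mam) := by
        calc |∑ i, ∑ j ∈ Finset.univ.erase i, aminus (x i - x j)|
            ≤ ∑ i, |∑ j ∈ Finset.univ.erase i, aminus (x i - x j)| :=
              Finset.abs_sum_le_sum_abs _ _
          _ ≤ ∑ _i : Fin (n+1), q * Mam := by
              apply Finset.sum_le_sum
              intro i _
              calc |∑ j ∈ Finset.univ.erase i, aminus (x i - x j)|
                  ≤ ∑ j ∈ Finset.univ.erase i, |aminus (x i - x j)| :=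
                    Finset.abs_sum_le_sum_abs _ _
                _ ≤ ∑ _j ∈ Finset.univ.erase i, Mam := by
                    apply Finset.sum_le_sum
                    intro j hj
                    exact hxm i j (Finset.ne_of_mem_erase hj).symm
                _ = q * Mam := by rw [Finset.sum_const, hcard i, nsmul_eq_mul]
          _ = (q + 1) * (q * Mam) := by
              rw [Finset.sum_const, Finset.card_univ]
              simp only [Fintype.card_fin, nsmul_eq_mul, hq]
              push_cast
              ring
      have hSp : ∀ i : Fin (n+1),
          |∑ j ∈ Finset.univ.erase i, aplus (x i - x j)| ≤ q * Map := by
        intro i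
        calc |∑ j ∈ Finset.univ.erase i, aplus (x i - x j)|
            ≤ ∑ j ∈ Finset.univ.erase i, |aplus (x i - x j)| :=
              Finset.abs_sum_le_sum_abs _ _
          _ ≤ ∑ _j ∈ Finset.univ.erase i, Map := by
              apply Finset.sum_le_sum
              intro j hj
              exact hxp i j (Finset.ne_of_mem_erase hj).symm
          _ = q * Map := by rw [Finset.sum_const, hcard i, nsmul_eq_mul]
      -- combine
      have hCop : Cop aplus aminus k (n+1) x =
          (-(∑ i, ∑ j ∈ Finset.univ.erase i, aminus (x i - x j))) * k (n+1) x
            + ∑ i : Fin (n + 1),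
              (∑ j ∈ Finset.univ.erase i, aplus (x i - x j)) * k n (x ∘ i.succAbove) := rfl
      rw [hCop]
      have step1 : |(-(∑ i, ∑ j ∈ Finset.univ.erase i, aminus (x i - x j))) * k (n+1) x|
          ≤ ((q + 1) * (q * Mam)) * E1 := by
        rw [abs_mul, abs_neg]
        exact mul_le_mul hS hx1 (abs_nonneg _) (by positivity)
      have step2 : |∑ i : Fin (n + 1),
            (∑ j ∈ Finset.univ.erase i, aplus (x i - x j)) * k n (x ∘ i.succAbove)|
          ≤ (q + 1) * ((q * Map) * E0) := by
        calc |∑ i : Fin (n + 1),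
              (∑ j ∈ Finset.univ.erase i, aplus (x i - x j)) * k n (x ∘ i.succAbove)|
            ≤ ∑ i : Fin (n + 1),
              |(∑ j ∈ Finset.univ.erase i, aplus (x i - x j)) * k n (x ∘ i.succAbove)| :=
              Finset.abs_sum_le_sum_abs _ _
          _ ≤ ∑ _i : Fin (n + 1), (q * Map) * E0 := by
              apply Finset.sum_le_sum
              intro i _
              rw [abs_mul]
              exact mul_le_mul (hSp i) (hx0 i) (abs_nonneg _) (by positivity)
          _ = (q + 1) * ((q * Map) * E0) := by
              rw [Finset.sum_const, Finset.card_univ]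
              simp only [Fintype.card_fin, nsmul_eq_mul, hq]
              push_cast
              ring
      have habs := abs_add_le
        ((-(∑ i, ∑ j ∈ Finset.univ.erase i, aminus (x i - x j))) * k (n+1) x)
        (∑ i : Fin (n + 1),
          (∑ j ∈ Finset.univ.erase i, aplus (x i - x j)) * k n (x ∘ i.succAbove))
      -- final arithmetic
      have hexp1 : Real.exp (-(q+1) * α') =
          Real.exp (-(α' - α) * (q+1)) * Real.exp (-α * (q+1)) := by
        rw [← Real.exp_add]; ring_nf
      have hexp2 : Real.exp (-q * α') = Real.exp (-(q+1) * α') * Real.exp α' := by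
        rw [← Real.exp_add]; ring_nf
      have hcast1 : ((n : ℝ) + 1) = (((n+1 : ℕ) : ℝ)) := by push_cast; ring
      have key : ((q + 1) * (q * Mam)) * E1 + (q + 1) * ((q * Map) * E0)
          ≤ (q+1) ^ 2 * Real.exp (-(α' - α) * (q+1)) * (Mam + Map * Real.exp α') * K *
            Real.exp (-α * (q+1)) := by
        have hb1 : ((q + 1) * (q * Mam)) * E1 ≤ ((q + 1) * (q * Mam)) *
            (K * Real.exp (-(q+1) * α')) := by
          apply mul_le_mul_of_nonneg_left _ (by positivity)
          calc E1 ≤ K * Real.exp (-((n+1 : ℕ) : ℝ) * α') := hE1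
            _ = K * Real.exp (-(q+1) * α') := by rw [hq, hcast1]
        have hb2 : (q + 1) * ((q * Map) * E0) ≤ (q + 1) * ((q * Map) *
            (K * Real.exp (-q * α'))) := by
          apply mul_le_mul_of_nonneg_left _ (by positivity)
          exact mul_le_mul_of_nonneg_left (hE0) (by positivity)
        have heq : ((q + 1) * (q * Mam)) * (K * Real.exp (-(q+1) * α'))
            + (q + 1) * ((q * Map) * (K * Real.exp (-q * α')))
            = (q+1) * q * Real.exp (-(q+1) * α') * (Mam + Map * Real.exp α') * K := by
          rw [hexp2]; ring
        have hfin : (q+1) * q * Real.exp (-(q+1) * α') * (Mam + Map * Real.exp α') * K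
            ≤ (q+1) ^ 2 * Real.exp (-(q+1) * α') * (Mam + Map * Real.exp α') * K := by
          have : (q+1) * q ≤ (q+1) ^ 2 := by nlinarith
          apply mul_le_mul_of_nonneg_right _ hK0
          apply mul_le_mul_of_nonneg_right _ (by positivity)
          exact mul_le_mul_of_nonneg_right this (by positivity)
        calc ((q + 1) * (q * Mam)) * E1 + (q + 1) * ((q * Map) * E0)
            ≤ ((q + 1) * (q * Mam)) * (K * Real.exp (-(q+1) * α'))
              + (q + 1) * ((q * Map) * (K * Real.exp (-q * α'))) := add_le_add hb1 hb2
          _ = (q+1) * q * Real.exp (-(q+1) * α') * (Mam + Map * Real.exp α') * K := heq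
          _ ≤ (q+1) ^ 2 * Real.exp (-(q+1) * α') * (Mam + Map * Real.exp α') * K := hfin
          _ = (q+1) ^ 2 * Real.exp (-(α' - α) * (q+1)) * (Mam + Map * Real.exp α') * K *
              Real.exp (-α * (q+1)) := by rw [hexp1]; ring
      have goalcast : (((n+1 : ℕ) : ℝ)) ^ 2 * Real.exp (-(α' - α) * ((n+1 : ℕ) : ℝ)) *
            (Mam + Map * Real.exp α') * K * Real.exp (-α * ((n+1 : ℕ) : ℝ))
          = (q+1) ^ 2 * Real.exp (-(α' - α) * (q+1)) * (Mam + Map * Real.exp α') * K *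
            Real.exp (-α * (q+1)) := by rw [← hcast1]
      rw [goalcast]
      calc |(-(∑ i, ∑ j ∈ Finset.univ.erase i, aminus (x i - x j))) * k (n+1) x
            + ∑ i : Fin (n + 1),
              (∑ j ∈ Finset.univ.erase i, aplus (x i - x j)) * k n (x ∘ i.succAbove)|
          ≤ ((q + 1) * (q * Mam)) * E1 + (q + 1) * ((q * Map) * E0) := by
            exact habs.trans (add_le_add step1 step2)
        _ ≤ _ := key
  refine ⟨part1, ?_⟩
  -- Part 2
  rw [knorm]
  apply iSup_le
  intro n
  have hbound := part1 n
  have hel : eLpNorm (Cop aplus aminus k n) ⊤ volume ≤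
      ENNReal.ofReal ((n : ℝ) ^ 2 * Real.exp (-(α' - α) * n) * (Mam + Map * Real.exp α') * K *
        Real.exp (-α * n)) := by
    have := eLpNorm_le_of_ae_bound (p := (⊤ : ℝ≥0∞)) (μ := (volume : Measure (Fin n → Rd d)))
      (f := Cop aplus aminus k n)
      (C := (n : ℝ) ^ 2 * Real.exp (-(α' - α) * n) * (Mam + Map * Real.exp α') * K *
        Real.exp (-α * n)) (by filter_upwards [hbound] with x hx; simpa [Real.norm_eq_abs] using hx)
    simpa using this
  calc ENNReal.ofReal (Real.exp (n * α)) * eLpNorm (Cop aplus aminus k n) ⊤ volume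
      ≤ ENNReal.ofReal (Real.exp (n * α)) *
        ENNReal.ofReal ((n : ℝ) ^ 2 * Real.exp (-(α' - α) * n) * (Mam + Map * Real.exp α') * K *
          Real.exp (-α * n)) := by
        exact mul_le_mul_right hel _
    _ = ENNReal.ofReal (Real.exp (n * α) *
        ((n : ℝ) ^ 2 * Real.exp (-(α' - α) * n) * (Mam + Map * Real.exp α') * K *
          Real.exp (-α * n))) := by
        rw [ENNReal.ofReal_mul (Real.exp_nonneg _)]
    _ = ENNReal.ofReal ((n : ℝ) ^ 2 * Real.exp (-(α' - α) * n) * (Mam + Map * Real.exp α') * K) := by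
        congr 1
        have : Real.exp ((n : ℝ) * α) * Real.exp (-α * n) = 1 := by
          rw [← Real.exp_add]; ring_nf; exact Real.exp_zero
        calc Real.exp (n * α) *
            ((n : ℝ) ^ 2 * Real.exp (-(α' - α) * n) * (Mam + Map * Real.exp α') * K *
              Real.exp (-α * n))
            = ((n : ℝ) ^ 2 * Real.exp (-(α' - α) * n) * (Mam + Map * Real.exp α') * K) *
              (Real.exp ((n : ℝ) * α) * Real.exp (-α * n)) := by ring
          _ = (n : ℝ) ^ 2 * Real.exp (-(α' - α) * n) * (Mam + Map * Real.exp α') * K := by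
              rw [this, mul_one]
    _ ≤ ENNReal.ofReal ((2 / (Real.exp 1 * (α' - α))) ^ 2 * (Mam + Map * Real.exp α') * K) := by
        apply ENNReal.ofReal_le_ofReal
        have h := nsq_exp_le (α' - α) (by linarith) n
        apply mul_le_mul_of_nonneg_right _ hK0
        exact mul_le_mul_of_nonneg_right h (by positivity)
    _ = ENNReal.ofReal ((2 / (Real.exp 1 * (α' - α))) ^ 2 * (Mam + Map * Real.exp α')) *
        knorm α' k := by
        rw [ENNReal.ofReal_mul (by positivity), hKdef, ENNReal.ofReal_toReal hkK.ne]
end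
end

section
/- Let α ∈ ℝ, ε ∈ (0,1], and let G = (G^{(n)})_{n≥0} be a pre-dual element such that Σ_{n≥0} (e^{−nα}/n!) ‖E⁺ G^{(n)}‖_{L¹} < ∞, where (E⁺ G^{(n)})(x₁,…,xₙ) = (Σ_{1≤i≠j≤n} a⁺(x_i−x_j)) G^{(n)}(x₁,…,xₙ). Then ‖Â⁽²⁾_ε G‖_α ≤ e^{α} ε Σ_{n≥0} (e^{−nα}/n!) ‖E⁺ G^{(n)}‖_{L¹}. -/
open MeasureTheory Filter Set Topology
open scoped ENNReal

noncomputable section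

/-- pre-dual elements: sequences `G = (G^{(n)})_{n ≥ 0}` -/
abbrev PreDual (d : ℕ) := (n : ℕ) → (Fin n → Rd d) → ℝ

/-- the pre-dual norm `‖G‖_α = Σ_n (e^{−nα}/n!) ‖G^{(n)}‖_{L¹}`, with values in `ℝ≥0∞`. -/
def gnorm {d : ℕ} (α : ℝ) (G : PreDual d) : ℝ≥0∞ :=
  ∑' n : ℕ, ENNReal.ofReal (Real.exp (-(n : ℝ) * α) / n.factorial) *
    eLpNorm (G n) 1 volume

/-- `E^±(x₁,…,xₙ) = Σ_{i ≠ j} a^±(x_i − x_j)` -/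
def Efun {d : ℕ} (a : Rd d → ℝ) (n : ℕ) (x : Fin n → Rd d) : ℝ :=
  ∑ i, ∑ j ∈ Finset.univ.erase i, a (x i - x j)

/-- `(Â⁽¹⁾_ε G)^{(n)} = −(mn + ε E⁻) G^{(n)}` -/
def A1hat {d : ℕ} (m ε : ℝ) (am : Rd d → ℝ) (G : PreDual d) : PreDual d :=
  fun n x => -(m * n + ε * Efun am n x) * G n x

/-- `(Â⁽²⁾_ε G)^{(n)}(x₁,…,xₙ) = ε ∫ (Σ_i a⁺(y−x_i)) G^{(n+1)}(x₁,…,xₙ,y) dy` -/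
def A2hat {d : ℕ} (ε : ℝ) (ap : Rd d → ℝ) (G : PreDual d) : PreDual d :=
  fun n x => ε * ∫ y : Rd d, (∑ i, ap (y - x i)) * G (n + 1) (Fin.snoc x y)



lemma mp_perm {d N : ℕ} (σ : Equiv.Perm (Fin N)) :
    MeasurePreserving (fun z : Fin N → Rd d => z ∘ σ) volume volume := by
  have h := MeasureTheory.volume_measurePreserving_piCongrLeft (fun _ : Fin N => Rd d) σ.symm
  have he : (fun z : Fin N → Rd d => z ∘ σ)
      = ⇑(MeasurableEquiv.piCongrLeft (fun _ : Fin N => Rd d) σ.symm) := by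
    funext z; funext j
    have := MeasurableEquiv.piCongrLeft_apply_apply (β := fun _ : Fin N => Rd d) σ.symm z (σ j)
    simpa using this.symm
  rw [he]; exact h

lemma mp_snoc {d n : ℕ} :
    MeasurePreserving (fun p : Rd d × (Fin n → Rd d) => (Fin.snoc p.2 p.1 : Fin (n+1) → Rd d))
      volume volume := by
  have h := (volume_preserving_piFinSuccAbove (fun _ : Fin (n+1) => Rd d) (Fin.last n)).symm
  have he : (fun p : Rd d × (Fin n → Rd d) => (Fin.snoc p.2 p.1 : Fin (n+1) → Rd d))
      = ⇑(MeasurableEquiv.piFinSuccAbove (fun _ : Fin (n+1) => Rd d) (Fin.last n)).symm := by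
    funext p
    show _ = (Fin.insertNthEquiv (fun _ : Fin (n+1) => Rd d) (Fin.last n)) p
    simp [Fin.insertNthEquiv, Fin.insertNth_last']
  rw [he]; exact h

lemma lint_snoc {d n : ℕ} (F : (Fin (n+1) → Rd d) → ℝ≥0∞) (hF : Measurable F) :
    ∫⁻ x : Fin n → Rd d, ∫⁻ y : Rd d, F (Fin.snoc x y) = ∫⁻ z, F z := by
  have h1 := mp_snoc (d := d) (n := n)
  have h2 := MeasureTheory.lintegral_prod_symm' (μ := (volume : Measure (Rd d)))
    (ν := (volume : Measure (Fin n → Rd d)))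
    (fun p => F (Fin.snoc p.2 p.1)) (hF.comp h1.measurable)
  have h3 := h1.lintegral_comp hF
  rw [← h3, MeasureTheory.Measure.volume_eq_prod]
  exact h2.symm

lemma qmp_pair {d N : ℕ} (p q : Fin (N+1)) (hpq : p ≠ q) :
    Measure.QuasiMeasurePreserving (fun z : Fin (N+1) → Rd d => z p - z q) volume volume := by
  have hmeas : Measurable (fun z : Fin (N+1) → Rd d => z p - z q) :=
    (measurable_pi_apply p).sub (measurable_pi_apply q)
  refine ⟨hmeas, Measure.AbsolutelyContinuous.mk fun s hs h0 => ?_⟩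
  rw [Measure.map_apply hmeas hs]
  obtain ⟨k, hk⟩ := Fin.exists_succAbove_eq (Ne.symm hpq)
  have e := volume_preserving_piFinSuccAbove (fun _ : Fin (N+1) => Rd d) p
  have hFmeas : Measurable (fun pr : Rd d × (Fin N → Rd d) => s.indicator (1 : Rd d → ℝ≥0∞) (pr.1 - pr.2 k)) :=
    (measurable_one.indicator hs).comp (measurable_fst.sub ((measurable_pi_apply k).comp measurable_snd))
  have key : volume ((fun z : Fin (N+1) → Rd d => z p - z q) ⁻¹' s)
      = ∫⁻ z : Fin (N+1) → Rd d, s.indicator 1 (z p - z q) := by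
    rw [← lintegral_indicator_one (hs.preimage hmeas)]
    congr 1
  rw [key]
  have : (fun z : Fin (N+1) → Rd d => s.indicator (1 : Rd d → ℝ≥0∞) (z p - z q))
      = fun z => (fun pr : Rd d × (Fin N → Rd d) => s.indicator (1 : Rd d → ℝ≥0∞) (pr.1 - pr.2 k))
          (MeasurableEquiv.piFinSuccAbove (fun _ : Fin (N+1) => Rd d) p z) := by
    funext z
    rw [← hk]; rfl
  rw [this, e.lintegral_comp hFmeas, MeasureTheory.Measure.volume_eq_prod,
    MeasureTheory.lintegral_prod_symm' _ hFmeas]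
  have inner : ∀ w : Fin N → Rd d,
      (∫⁻ a : Rd d, s.indicator (1 : Rd d → ℝ≥0∞) (a - w k)) = 0 := by
    intro w
    have := (measurePreserving_sub_right (volume : Measure (Rd d)) (w k)).lintegral_comp
      (f := s.indicator (1 : Rd d → ℝ≥0∞)) (measurable_one.indicator hs)
    rw [this, lintegral_indicator_one hs, h0]
  simp only [inner, lintegral_zero]

lemma I_pairs_eq {d N : ℕ} {A : Rd d → ℝ} (hA : Measurable A)
    {H : (Fin N → Rd d) → ℝ} (hH : Measurable H)
    (hsym : ∀ σ : Equiv.Perm (Fin N), (fun z => H (z ∘ σ)) =ᵐ[volume] H)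
    {p q p' q' : Fin N} (hpq : p ≠ q) (hpq' : p' ≠ q') :
    ∫⁻ z, ENNReal.ofReal (A (z p - z q)) * (‖H z‖₊ : ℝ≥0∞)
      = ∫⁻ z, ENNReal.ofReal (A (z p' - z q')) * (‖H z‖₊ : ℝ≥0∞) := by
  classical
  set τ := Equiv.swap p p' with hτ
  set σ := τ.trans (Equiv.swap (τ q) q') with hσ
  have hτp : τ p = p' := Equiv.swap_apply_left _ _
  have hσq : σ q = q' := Equiv.swap_apply_left _ _
  have h1 : τ q ≠ p' := by
    intro h
    exact hpq (τ.injective (by rw [hτp, h]))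
  have hσp : σ p = p' := by
    show Equiv.swap (τ q) q' (τ p) = p'
    rw [hτp]
    exact Equiv.swap_apply_of_ne_of_ne (Ne.symm h1) hpq'
  have hg : Measurable fun z : Fin N → Rd d =>
      ENNReal.ofReal (A (z p - z q)) * (‖H z‖₊ : ℝ≥0∞) :=
    (ENNReal.measurable_ofReal.comp
      (hA.comp ((measurable_pi_apply p).sub (measurable_pi_apply q)))).mul hH.nnnorm.coe_nnreal_ennreal
  have hcomp := (mp_perm (d := d) σ).lintegral_comp hg
  rw [← hcomp]
  refine lintegral_congr_ae ?_
  filter_upwards [hsym σ] with z hz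
  show ENNReal.ofReal (A (z (σ p) - z (σ q))) * (‖H (z ∘ σ)‖₊ : ℝ≥0∞) = _
  rw [hσp, hσq, hz]

lemma core {d n : ℕ} {ε : ℝ} (hε0 : 0 < ε) {A : Rd d → ℝ} (hA : Measurable A)
    (hA0 : ∀ u, 0 ≤ A u)
    {H : (Fin (n+1) → Rd d) → ℝ} (hH : Measurable H)
    (hsym : ∀ σ : Equiv.Perm (Fin (n+1)), (fun z => H (z ∘ σ)) =ᵐ[volume] H) :
    (n + 1 : ℝ≥0∞) *
      eLpNorm (fun x : Fin n → Rd d =>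
        ε * ∫ y : Rd d, (∑ i, A (y - x i)) * H (Fin.snoc x y)) 1 volume
      ≤ ENNReal.ofReal ε * eLpNorm (fun z => Efun A (n+1) z * H z) 1 volume := by
  classical
  set I : Fin (n+1) → Fin (n+1) → ℝ≥0∞ := fun p q =>
    ∫⁻ z, ENNReal.ofReal (A (z p - z q)) * (‖H z‖₊ : ℝ≥0∞) with hI
  have hIm : ∀ p q : Fin (n+1), Measurable fun z : Fin (n+1) → Rd d =>
      ENNReal.ofReal (A (z p - z q)) * (‖H z‖₊ : ℝ≥0∞) := fun p q =>
    (ENNReal.measurable_ofReal.comp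
      (hA.comp ((measurable_pi_apply p).sub (measurable_pi_apply q)))).mul hH.nnnorm.coe_nnreal_ennreal
  -- Step 1 : the E-side
  have step1 : eLpNorm (fun z => Efun A (n+1) z * H z) 1 volume
      = ∑ p : Fin (n+1), ∑ q ∈ Finset.univ.erase p, I p q := by
    rw [eLpNorm_one_eq_lintegral_enorm]; simp only [enorm_eq_nnnorm]
    have h1 : ∀ z : Fin (n+1) → Rd d, (‖Efun A (n+1) z * H z‖₊ : ℝ≥0∞)
        = ∑ p : Fin (n+1), ∑ q ∈ Finset.univ.erase p,
            ENNReal.ofReal (A (z p - z q)) * (‖H z‖₊ : ℝ≥0∞) := by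
      intro z
      rw [nnnorm_mul, ENNReal.coe_mul, Efun,
        ((enorm_eq_nnnorm _).symm.trans (Real.enorm_eq_ofReal (Finset.sum_nonneg fun p _ =>
          Finset.sum_nonneg fun q _ => hA0 _))),
        ENNReal.ofReal_sum_of_nonneg
          (fun p _ => Finset.sum_nonneg fun q _ => hA0 _), Finset.sum_mul]
      refine Finset.sum_congr rfl fun p _ => ?_
      rw [ENNReal.ofReal_sum_of_nonneg (fun q _ => hA0 _), Finset.sum_mul]
    rw [lintegral_congr h1, lintegral_finset_sum _
      (fun p _ => Finset.measurable_sum _ (fun q _ => hIm p q))]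
    exact Finset.sum_congr rfl fun p _ => lintegral_finset_sum _ (fun q _ => hIm p q)
  -- Step 2 : the A2-side
  have step2 : eLpNorm (fun x : Fin n → Rd d =>
        ε * ∫ y : Rd d, (∑ i, A (y - x i)) * H (Fin.snoc x y)) 1 volume
      ≤ ENNReal.ofReal ε * ∑ i : Fin n, I (Fin.last n) i.castSucc := by
    rw [eLpNorm_one_eq_lintegral_enorm]; simp only [enorm_eq_nnnorm]
    have hb : ∀ x : Fin n → Rd d,
        (‖ε * ∫ y : Rd d, (∑ i, A (y - x i)) * H (Fin.snoc x y)‖₊ : ℝ≥0∞)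
        ≤ ENNReal.ofReal ε * ∫⁻ y, ∑ i : Fin n,
            ENNReal.ofReal (A (y - x i)) * (‖H (Fin.snoc x y)‖₊ : ℝ≥0∞) := by
      intro x
      rw [nnnorm_mul, ENNReal.coe_mul, ((enorm_eq_nnnorm _).symm.trans (Real.enorm_eq_ofReal hε0.le))]
      refine mul_le_mul_right ?_ _
      refine le_trans (enorm_integral_le_lintegral_enorm _)
        (le_of_eq (lintegral_congr fun y => ?_))
      rw [enorm_eq_nnnorm, nnnorm_mul, ENNReal.coe_mul,
        ((enorm_eq_nnnorm _).symm.trans (Real.enorm_eq_ofReal (Finset.sum_nonneg fun i _ => hA0 _))),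
        ENNReal.ofReal_sum_of_nonneg (fun i _ => hA0 _), Finset.sum_mul]
    have hprodmeas : ∀ i : Fin n, Measurable
        (fun pr : (Fin n → Rd d) × Rd d =>
          ENNReal.ofReal (A (pr.2 - pr.1 i)) * (‖H (Fin.snoc pr.1 pr.2)‖₊ : ℝ≥0∞)) := by
      intro i
      have hsnoc : Measurable fun pr : (Fin n → Rd d) × Rd d =>
          (Fin.snoc pr.1 pr.2 : Fin (n+1) → Rd d) :=
        mp_snoc.measurable.comp measurable_swap
      exact (ENNReal.measurable_ofReal.comp
        (hA.comp (measurable_snd.sub ((measurable_pi_apply i).comp measurable_fst)))).mul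
        (hH.comp hsnoc).nnnorm.coe_nnreal_ennreal
    calc ∫⁻ x, (‖ε * ∫ y : Rd d, (∑ i, A (y - x i)) * H (Fin.snoc x y)‖₊ : ℝ≥0∞)
        ≤ ∫⁻ x, ENNReal.ofReal ε * ∫⁻ y, ∑ i : Fin n,
            ENNReal.ofReal (A (y - x i)) * (‖H (Fin.snoc x y)‖₊ : ℝ≥0∞) :=
          lintegral_mono hb
      _ = ENNReal.ofReal ε * ∫⁻ x, ∫⁻ y, ∑ i : Fin n,
            ENNReal.ofReal (A (y - x i)) * (‖H (Fin.snoc x y)‖₊ : ℝ≥0∞) :=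
          lintegral_const_mul' _ _ ENNReal.ofReal_ne_top
      _ = ENNReal.ofReal ε * ∑ i : Fin n, I (Fin.last n) i.castSucc := by
          congr 1
          have h2 : ∀ x : Fin n → Rd d, (∫⁻ y, ∑ i : Fin n,
              ENNReal.ofReal (A (y - x i)) * (‖H (Fin.snoc x y)‖₊ : ℝ≥0∞))
              = ∑ i : Fin n, ∫⁻ y,
                ENNReal.ofReal (A (y - x i)) * (‖H (Fin.snoc x y)‖₊ : ℝ≥0∞) := by
            intro x
            refine lintegral_finset_sum _ fun i _ => ?_
            have hsnoc : Measurable fun y : Rd d => (Fin.snoc x y : Fin (n+1) → Rd d) :=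
              mp_snoc.measurable.comp measurable_prodMk_right
            exact (ENNReal.measurable_ofReal.comp
              (hA.comp ((measurable_id.sub measurable_const)))).mul (hH.comp hsnoc).nnnorm.coe_nnreal_ennreal
          rw [lintegral_congr h2, lintegral_finset_sum _
            (fun i _ => (hprodmeas i).lintegral_prod_right')]
          refine Finset.sum_congr rfl fun i _ => ?_
          simp only [hI]
          rw [← lint_snoc _ (hIm (Fin.last n) i.castSucc)]
          refine lintegral_congr fun x => lintegral_congr fun y => ?_
          simp [Fin.snoc_last, Fin.snoc_castSucc]
  -- Step 3 : counting
  have step3 : (n + 1 : ℝ≥0∞) * ∑ i : Fin n, I (Fin.last n) i.castSucc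
      ≤ ∑ p : Fin (n+1), ∑ q ∈ Finset.univ.erase p, I p q := by
    rcases Nat.eq_zero_or_pos n with hn | hn
    · subst hn; simp
    · obtain ⟨k, rfl⟩ := Nat.exists_eq_succ_of_ne_zero hn.ne'
      set c : ℝ≥0∞ := I (Fin.last (k+1)) ((0 : Fin (k+1)).castSucc) with hc
      have hlast : ((0 : Fin (k+1)).castSucc : Fin (k+2)) ≠ Fin.last (k+1) :=
        (Fin.castSucc_lt_last _).ne
      have hA2 : ∀ i : Fin (k+1), I (Fin.last (k+1)) i.castSucc = c :=
        fun i => I_pairs_eq hA hH hsym ((Fin.castSucc_lt_last i).ne') hlast.symm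
      have hE : ∀ p : Fin (k+2), ∀ q ∈ Finset.univ.erase p, I p q = c := by
        intro p q hq
        exact I_pairs_eq hA hH hsym (Ne.symm (Finset.mem_erase.1 hq).1) hlast.symm
      rw [Finset.sum_congr rfl (fun i _ => hA2 i), Finset.sum_const,
        Finset.sum_congr rfl (fun p _ => Finset.sum_congr rfl (fun q hq => hE p q hq))]
      simp only [Finset.sum_const, Finset.card_erase_of_mem (Finset.mem_univ _),
        Finset.card_univ, Fintype.card_fin, nsmul_eq_mul, Nat.succ_eq_add_one,
        Nat.add_sub_cancel]
      push_cast
      exact le_of_eq (by ring)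
  calc (n + 1 : ℝ≥0∞) * eLpNorm _ 1 volume
      ≤ (n + 1 : ℝ≥0∞) * (ENNReal.ofReal ε * ∑ i : Fin n, I (Fin.last n) i.castSucc) :=
        mul_le_mul_right step2 _
    _ = ENNReal.ofReal ε * ((n + 1 : ℝ≥0∞) * ∑ i : Fin n, I (Fin.last n) i.castSucc) := by ring
    _ ≤ ENNReal.ofReal ε * eLpNorm (fun z => Efun A (n+1) z * H z) 1 volume := by
        rw [step1]; exact mul_le_mul_right step3 _

-- the real-number coefficient identity
lemma coef_id (α : ℝ) (ε : ℝ) (n : ℕ) :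
    Real.exp (-(n : ℝ) * α) / n.factorial * ε * ((n : ℝ) + 1)⁻¹
      = Real.exp α * ε * (Real.exp (-((n : ℝ) + 1) * α) / (n + 1).factorial) := by
  have hfac : (((n+1).factorial : ℕ) : ℝ) = ((n : ℝ) + 1) * (n.factorial : ℝ) := by
    rw [Nat.factorial_succ]; push_cast; ring
  have hexp2 : Real.exp (-((n : ℝ) + 1) * α) = Real.exp (-(n : ℝ) * α) * Real.exp (-α) := by
    rw [← Real.exp_add]; congr 1; ring
  rw [hexp2, hfac, Real.exp_neg]
  have hn : ((n : ℝ) + 1) ≠ 0 := by positivity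
  have hf : (n.factorial : ℝ) ≠ 0 := by positivity
  field_simp

theorem statement5
    (d : ℕ) (hd : 1 ≤ d) (m : ℝ) (hm : 0 ≤ m)
    (aplus aminus : Rd d → ℝ)
    (hap_int : Integrable aplus volume) (ham_int : Integrable aminus volume)
    (hap_bdd : eLpNorm aplus ⊤ volume < ⊤) (ham_bdd : eLpNorm aminus ⊤ volume < ⊤)
    (hap_even : ∀ᵐ x ∂volume, aplus (-x) = aplus x)
    (ham_even : ∀ᵐ x ∂volume, aminus (-x) = aminus x)
    (hap_pos : ∀ᵐ x ∂volume, 0 ≤ aplus x)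
    (ham_pos : ∀ᵐ x ∂volume, 0 ≤ aminus x)
    (α : ℝ) (ε : ℝ) (hε : ε ∈ Set.Ioc (0 : ℝ) 1)
    (G : PreDual d)
    (hG_int : ∀ n, Integrable (G n) volume)
    (hG_symm : ∀ n (σ : Equiv.Perm (Fin n)) (x : Fin n → Rd d), G n (x ∘ σ) = G n x)
    (hGE : ∑' n : ℕ, ENNReal.ofReal (Real.exp (-(n : ℝ) * α) / n.factorial) *
        eLpNorm (fun x => Efun aplus n x * G n x) 1 volume < ⊤) :
    gnorm α (A2hat ε aplus G) ≤
      ENNReal.ofReal (Real.exp α * ε) *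
        ∑' n : ℕ, ENNReal.ofReal (Real.exp (-(n : ℝ) * α) / n.factorial) *
          eLpNorm (fun x => Efun aplus n x * G n x) 1 volume := by
  classical
  obtain ⟨hε0, hε1⟩ := hε
  -- measurable representatives
  set A : Rd d → ℝ := fun u => max (hap_int.1.mk aplus u) 0 with hAdef
  have hA : Measurable A := hap_int.1.measurable_mk.max measurable_const
  have hA0 : ∀ u, 0 ≤ A u := fun u => le_max_right _ _
  have hA_ae : aplus =ᵐ[volume] A := by
    filter_upwards [hap_int.1.ae_eq_mk, hap_pos] with u h1 h2
    rw [hAdef]; dsimp only; rw [← h1, max_eq_left h2]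
  set G' : PreDual d := fun n => (hG_int n).1.mk (G n) with hG'def
  have hG' : ∀ n, Measurable (G' n) := fun n => (hG_int n).1.measurable_mk
  have hG'ae : ∀ n, G n =ᵐ[volume] G' n := fun n => (hG_int n).1.ae_eq_mk
  -- a.e. symmetry of the representative
  have hsym : ∀ n (σ : Equiv.Perm (Fin n)),
      (fun z : Fin n → Rd d => G' n (z ∘ σ)) =ᵐ[volume] G' n := by
    intro n σ
    have h1 : (fun z : Fin n → Rd d => G n (z ∘ σ))
        =ᵐ[volume] (fun z => G' n (z ∘ σ)) :=
      (mp_perm σ).quasiMeasurePreserving.ae_eq (hG'ae n)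
    have h2 : (fun z : Fin n → Rd d => G n (z ∘ σ)) = G n :=
      funext fun z => hG_symm n σ z
    exact (h1.symm.trans (by rw [h2])).trans (hG'ae n)
  -- congruence for the A2 side
  have cong1 : ∀ n : ℕ, eLpNorm (A2hat ε aplus G n) 1 volume
      = eLpNorm (fun x : Fin n → Rd d =>
          ε * ∫ y : Rd d, (∑ i, A (y - x i)) * G' (n+1) (Fin.snoc x y)) 1 volume := by
    intro n
    refine eLpNorm_congr_ae ?_
    have hmp : MeasurePreserving
        (fun p : (Fin n → Rd d) × Rd d => (Fin.snoc p.1 p.2 : Fin (n+1) → Rd d))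
        (volume.prod volume) volume := by
      have h0 := mp_snoc (d := d) (n := n)
      rw [Measure.volume_eq_prod] at h0
      exact h0.comp Measure.measurePreserving_swap
    have hae2 := hmp.quasiMeasurePreserving.ae_eq (hG'ae (n+1))
    have hae_y : ∀ᵐ x : Fin n → Rd d, ∀ᵐ y : Rd d,
        G (n+1) (Fin.snoc x y) = G' (n+1) (Fin.snoc x y) :=
      Measure.ae_ae_of_ae_prod hae2
    have hay : ∀ (x : Fin n → Rd d) (i : Fin n), ∀ᵐ y : Rd d,
        aplus (y - x i) = A (y - x i) := fun x i =>
      (measurePreserving_sub_right volume (x i)).quasiMeasurePreserving.ae hA_ae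
    filter_upwards [hae_y] with x hx
    show ε * ∫ y : Rd d, (∑ i, aplus (y - x i)) * G (n+1) (Fin.snoc x y) = _
    congr 1
    refine integral_congr_ae ?_
    have hall : ∀ᵐ y : Rd d, ∀ i : Fin n, aplus (y - x i) = A (y - x i) :=
      (ae_all_iff).2 fun i => hay x i
    filter_upwards [hx, hall] with y h1 h2
    rw [h1]
    congr 1
    exact Finset.sum_congr rfl fun i _ => h2 i
  -- congruence for the E side
  have cong2 : ∀ n : ℕ,
      eLpNorm (fun z : Fin (n+1) → Rd d => Efun aplus (n+1) z * G (n+1) z) 1 volume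
      = eLpNorm (fun z : Fin (n+1) → Rd d => Efun A (n+1) z * G' (n+1) z) 1 volume := by
    intro n
    refine eLpNorm_congr_ae ?_
    have hpair : ∀ p q : Fin (n+1), ∀ᵐ z : Fin (n+1) → Rd d,
        p ≠ q → aplus (z p - z q) = A (z p - z q) := by
      intro p q
      by_cases h : p = q
      · exact Filter.Eventually.of_forall fun z hne => absurd h hne
      · filter_upwards [(qmp_pair p q h).ae hA_ae] with z hz _
        exact hz
    have hallp : ∀ᵐ z : Fin (n+1) → Rd d, ∀ p q : Fin (n+1),
        p ≠ q → aplus (z p - z q) = A (z p - z q) :=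
      (ae_all_iff).2 fun p => (ae_all_iff).2 fun q => hpair p q
    filter_upwards [hallp, hG'ae (n+1)] with z h1 h2
    rw [h2]
    congr 1
    rw [Efun, Efun]
    refine Finset.sum_congr rfl fun p _ => Finset.sum_congr rfl fun q hq => ?_
    exact h1 p q (Ne.symm (Finset.mem_erase.1 hq).1)
  -- per-n bound
  have keyn : ∀ n : ℕ, ((n : ℝ≥0∞) + 1) * eLpNorm (A2hat ε aplus G n) 1 volume
      ≤ ENNReal.ofReal ε *
        eLpNorm (fun z : Fin (n+1) → Rd d => Efun aplus (n+1) z * G (n+1) z) 1 volume := by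
    intro n
    rw [cong1 n, cong2 n]
    exact core hε0 hA hA0 (hG' (n+1)) (hsym (n+1))
  -- coefficients
  set c : ℕ → ℝ≥0∞ := fun n => ENNReal.ofReal (Real.exp (-(n : ℝ) * α) / n.factorial)
    with hcdef
  set T : ℕ → ℝ≥0∞ := fun n =>
    eLpNorm (fun x : Fin n → Rd d => Efun aplus n x * G n x) 1 volume with hTdef
  have hterm : ∀ n : ℕ, c n * eLpNorm (A2hat ε aplus G n) 1 volume
      ≤ ENNReal.ofReal (Real.exp α * ε) * (c (n+1) * T (n+1)) := by
    intro n
    have hn1 : ((n : ℝ≥0∞) + 1) ≠ 0 := by simp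
    have hnt : ((n : ℝ≥0∞) + 1) ≠ ⊤ := by
      simp [ENNReal.add_ne_top]
    have hX : eLpNorm (A2hat ε aplus G n) 1 volume
        ≤ ENNReal.ofReal ε * T (n+1) / ((n : ℝ≥0∞) + 1) := by
      rw [ENNReal.le_div_iff_mul_le (Or.inl hn1) (Or.inl hnt), mul_comm]
      exact keyn n
    have hcoe : ((n : ℝ≥0∞) + 1) = ENNReal.ofReal ((n : ℝ) + 1) := by
      rw [ENNReal.ofReal_add (by positivity) zero_le_one, ENNReal.ofReal_natCast,
        ENNReal.ofReal_one]
    have hcoef : c n * ENNReal.ofReal ε / ((n : ℝ≥0∞) + 1)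
        = ENNReal.ofReal (Real.exp α * ε) * c (n+1) := by
      rw [hcdef]
      dsimp only
      rw [hcoe,
        ← ENNReal.ofReal_mul (by positivity : (0:ℝ) ≤ Real.exp (-(n : ℝ) * α) / n.factorial),
        ← ENNReal.ofReal_div_of_pos (by positivity : (0:ℝ) < (n : ℝ) + 1),
        ← ENNReal.ofReal_mul (mul_nonneg (Real.exp_pos α).le hε0.le)]
      refine congrArg ENNReal.ofReal ?_
      push_cast
      rw [← coef_id α ε n]
      ring
    calc c n * eLpNorm (A2hat ε aplus G n) 1 volume
        ≤ c n * (ENNReal.ofReal ε * T (n+1) / ((n : ℝ≥0∞) + 1)) := mul_le_mul_right hX _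
      _ = (c n * ENNReal.ofReal ε / ((n : ℝ≥0∞) + 1)) * T (n+1) := by
          rw [ENNReal.div_eq_inv_mul, ENNReal.div_eq_inv_mul]; ring
      _ = ENNReal.ofReal (Real.exp α * ε) * (c (n+1) * T (n+1)) := by
          rw [hcoef]; ring
  show (∑' n : ℕ, c n * eLpNorm (A2hat ε aplus G n) 1 volume)
      ≤ ENNReal.ofReal (Real.exp α * ε) * ∑' n : ℕ, c n * T n
  calc (∑' n : ℕ, c n * eLpNorm (A2hat ε aplus G n) 1 volume)
      ≤ ∑' n : ℕ, ENNReal.ofReal (Real.exp α * ε) * (c (n+1) * T (n+1)) :=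
        ENNReal.tsum_le_tsum hterm
    _ = ENNReal.ofReal (Real.exp α * ε) * ∑' n : ℕ, c (n+1) * T (n+1) :=
        ENNReal.tsum_mul_left
    _ ≤ ENNReal.ofReal (Real.exp α * ε) * ∑' n : ℕ, c n * T n :=
        mul_le_mul_right
          (ENNReal.tsum_comp_le_tsum_of_injective Nat.succ_injective fun k => c k * T k) _
end
end

section
/- Let α ∈ ℝ, ε ∈ (0,1], θ > 0 and κ ∈ (0,1) satisfy a⁺(x) ≤ θ a⁻(x) for a.e. x and e^{α} θ ≤ κ. Let G = (G^{(n)})_{n≥0} be a pre-dual element with G^{(n)} ≥ 0 a.e. for every n, and with Σ_{n≥0} (e^{−nα}/n!) ‖E⁻ G^{(n)}‖_{L¹} < ∞ and Σ_{n≥0} (e^{−nα}/n!) ‖E⁺ G^{(n)}‖_{L¹} < ∞. Then Σ_{n≥0} (e^{−nα}/n!) ∫_{(ℝ^d)^n} ((Â⁽¹⁾_ε G)^{(n)} + κ^{−1} (Â⁽²⁾_ε G)^{(n)})(x₁,…,xₙ) dx₁⋯dxₙ ≤ 0. -/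
open MeasureTheory Filter Set Topology
open scoped ENNReal

noncomputable section

namespace Stmt6Aux

variable {d : ℕ}

lemma qmp_eval {ι : Type*} [Fintype ι] (k : ι) :
    Measure.QuasiMeasurePreserving (Function.eval k)
      (volume : Measure (ι → Rd d)) (volume : Measure (Rd d)) := by
  classical
  refine ⟨measurable_pi_apply k, Measure.AbsolutelyContinuous.mk fun S hS h0 => ?_⟩
  rw [Measure.map_apply (measurable_pi_apply k) hS]
  have he : Function.eval k ⁻¹' S =
      Set.pi Set.univ (Function.update (fun _ : ι => (Set.univ : Set (Rd d))) k S) :=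
    Set.eval_preimage
  rw [he, volume_pi, Measure.pi_pi]
  exact Finset.prod_eq_zero (Finset.mem_univ k) (by simp [h0])

lemma qmp_sub_eval_aux {n : ℕ} (p : Fin n → Prop) [DecidablePred p] [Unique {k // p k}]
    (i : {k // p k}) (j : {k // ¬ p k}) :
    Measure.QuasiMeasurePreserving (fun x : Fin n → Rd d => x i.1 - x j.1)
      (volume : Measure (Fin n → Rd d)) (volume : Measure (Rd d)) := by
  classical
  have h1 : MeasurePreserving (fun u : {k // p k} → Rd d => u i)
      volume (volume : Measure (Rd d)) := by
    have h := volume_preserving_piUnique (fun _ : {k // p k} => Rd d)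
    have hcoe : ⇑(MeasurableEquiv.piUnique (fun _ : {k // p k} => Rd d))
        = fun u : {k // p k} → Rd d => u i := by
      funext u
      rw [Unique.eq_default i]
      rfl
    rwa [hcoe] at h
  have hmeas : Measurable (fun q : ({k // p k} → Rd d) × ({k // ¬ p k} → Rd d) =>
      (q.1 i, q.2 j)) :=
    ((measurable_pi_apply _).comp measurable_fst).prodMk
      ((measurable_pi_apply _).comp measurable_snd)
  have hqpair : Measure.QuasiMeasurePreserving
      (fun q : ({k // p k} → Rd d) × ({k // ¬ p k} → Rd d) => (q.1 i, q.2 j))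
      volume ((volume : Measure (Rd d)).prod (volume : Measure (Rd d))) := by
    refine ⟨hmeas, Measure.AbsolutelyContinuous.mk fun S hS h0 => ?_⟩
    rw [Measure.map_apply hmeas hS]
    have hpre : MeasurableSet ((fun q : ({k // p k} → Rd d) × ({k // ¬ p k} → Rd d) =>
        (q.1 i, q.2 j)) ⁻¹' S) := hmeas hS
    have hvol : (volume : Measure (({k // p k} → Rd d) × ({k // ¬ p k} → Rd d)))
        = (volume : Measure ({k // p k} → Rd d)).prod volume := rfl
    rw [hvol, Measure.measure_prod_null hpre]
    have hslice : ∀ᵐ y ∂(volume : Measure (Rd d)), volume (Prod.mk y ⁻¹' S) = 0 := by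
      have h2 := (Measure.measure_prod_null hS).1 h0
      filter_upwards [h2] with y hy using hy
    filter_upwards [h1.quasiMeasurePreserving.ae hslice] with u hu
    exact (qmp_eval (d := d) j).preimage_null hu
  have hsub : Measure.QuasiMeasurePreserving (fun r : Rd d × Rd d => r.1 - r.2)
      ((volume : Measure (Rd d)).prod volume) volume :=
    quasiMeasurePreserving_sub volume volume
  have he : MeasurePreserving (MeasurableEquiv.piEquivPiSubtypeProd (fun _ : Fin n => Rd d) p)
      volume volume := volume_preserving_piEquivPiSubtypeProd (fun _ : Fin n => Rd d) p
  have hfun : (fun x : Fin n → Rd d => x i.1 - x j.1)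
      = (fun r : Rd d × Rd d => r.1 - r.2) ∘
        ((fun q : ({k // p k} → Rd d) × ({k // ¬ p k} → Rd d) => (q.1 i, q.2 j)) ∘
          (MeasurableEquiv.piEquivPiSubtypeProd (fun _ : Fin n => Rd d) p)) := rfl
  rw [hfun]
  exact (hsub.comp hqpair).comp he.quasiMeasurePreserving

lemma qmp_sub_eval {n : ℕ} {i j : Fin n} (hij : i ≠ j) :
    Measure.QuasiMeasurePreserving (fun x : Fin n → Rd d => x i - x j)
      (volume : Measure (Fin n → Rd d)) (volume : Measure (Rd d)) := by
  classical
  haveI : Unique {k : Fin n // k = i} := ⟨⟨⟨i, rfl⟩⟩, fun a => Subtype.ext a.2⟩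
  exact qmp_sub_eval_aux (fun k : Fin n => k = i) ⟨i, rfl⟩ ⟨j, fun h => hij h.symm⟩

lemma perm_integral {n : ℕ} (σ : Equiv.Perm (Fin n)) (f : (Fin n → Rd d) → ℝ) :
    ∫ x : Fin n → Rd d, f (x ∘ σ) = ∫ x : Fin n → Rd d, f x := by
  have h := ((volume_measurePreserving_piCongrLeft (fun _ : Fin n => Rd d) σ).symm).integral_comp' f
  have hcoe : ∀ x : Fin n → Rd d,
      (MeasurableEquiv.piCongrLeft (fun _ : Fin n => Rd d) σ).symm x = x ∘ σ := by
    intro x; funext a; simp [MeasurableEquiv.piCongrLeft]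
  simp only [hcoe] at h
  exact h

end Stmt6Aux

set_option maxHeartbeats 1000000 in
theorem statement6
    (d : ℕ) (hd : 1 ≤ d) (m : ℝ) (hm : 0 ≤ m)
    (aplus aminus : Rd d → ℝ)
    (hap_int : Integrable aplus volume) (ham_int : Integrable aminus volume)
    (hap_bdd : eLpNorm aplus ⊤ volume < ⊤) (ham_bdd : eLpNorm aminus ⊤ volume < ⊤)
    (hap_even : ∀ᵐ x ∂volume, aplus (-x) = aplus x)
    (ham_even : ∀ᵐ x ∂volume, aminus (-x) = aminus x)
    (hap_pos : ∀ᵐ x ∂volume, 0 ≤ aplus x)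
    (ham_pos : ∀ᵐ x ∂volume, 0 ≤ aminus x)
    (α : ℝ) (ε : ℝ) (hε : ε ∈ Set.Ioc (0 : ℝ) 1)
    (θ : ℝ) (hθ : 0 < θ) (κ : ℝ) (hκ : κ ∈ Set.Ioo (0 : ℝ) 1)
    (hdom : ∀ᵐ x ∂volume, aplus x ≤ θ * aminus x)
    (hκθ : Real.exp α * θ ≤ κ)
    (G : PreDual d)
    (hG_int : ∀ n, Integrable (G n) volume)
    (hG_symm : ∀ n (σ : Equiv.Perm (Fin n)) (x : Fin n → Rd d), G n (x ∘ σ) = G n x)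
    (hG_pos : ∀ n, ∀ᵐ x ∂(volume : Measure (Fin n → Rd d)), 0 ≤ G n x)
    (hGEm : ∑' n : ℕ, ENNReal.ofReal (Real.exp (-(n : ℝ) * α) / n.factorial) *
        eLpNorm (fun x => Efun aminus n x * G n x) 1 volume < ⊤)
    (hGEp : ∑' n : ℕ, ENNReal.ofReal (Real.exp (-(n : ℝ) * α) / n.factorial) *
        eLpNorm (fun x => Efun aplus n x * G n x) 1 volume < ⊤) :
    (∑' n : ℕ, (Real.exp (-(n : ℝ) * α) / n.factorial) *
        ∫ x : Fin n → Rd d, (A1hat m ε aminus G n x + κ⁻¹ * A2hat ε aplus G n x)) ≤ 0 := by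
  classical
  obtain ⟨hε0, hε1⟩ := hε
  obtain ⟨hκ0, hκ1⟩ := hκ
  set w : ℕ → ℝ := fun n => Real.exp (-(n : ℝ) * α) / n.factorial with hw
  have hwpos : ∀ n, 0 < w n := fun n =>
    div_pos (Real.exp_pos _) (by exact_mod_cast Nat.factorial_pos n)
  -- transporting a.e. statements to pair differences
  have htrans : ∀ (Q : Rd d → Prop), (∀ᵐ u ∂(volume : Measure (Rd d)), Q u) →
      ∀ n : ℕ, ∀ᵐ x ∂(volume : Measure (Fin n → Rd d)),
        ∀ i j : Fin n, i ≠ j → Q (x i - x j) := by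
    intro Q hQ n
    rw [ae_all_iff]
    intro i
    rw [ae_all_iff]
    intro j
    by_cases hij : i = j
    · filter_upwards with x hx
      exact absurd hij hx
    · filter_upwards [(Stmt6Aux.qmp_sub_eval hij).ae hQ] with x hx _ using hx
  -- a.e.-measurability of `Efun a * G`
  have hEGaesm : ∀ (a : Rd d → ℝ), Integrable a volume → ∀ n : ℕ,
      AEStronglyMeasurable (fun x : Fin n → Rd d => Efun a n x * G n x) volume := by
    intro a ha n
    have hre : (fun x : Fin n → Rd d => Efun a n x * G n x)
        = fun x => ∑ i : Fin n, ∑ j ∈ Finset.univ.erase i, a (x i - x j) * G n x := by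
      funext x
      rw [Efun, Finset.sum_mul]
      exact Finset.sum_congr rfl fun i _ => Finset.sum_mul _ _ _
    rw [hre]
    refine Finset.aestronglyMeasurable_fun_sum _ fun i _ => ?_
    refine Finset.aestronglyMeasurable_fun_sum _ fun j hj => ?_
    have hij : i ≠ j := fun h => (Finset.mem_erase.1 hj).1 h.symm
    exact (ha.aestronglyMeasurable.comp_quasiMeasurePreserving
      (Stmt6Aux.qmp_sub_eval hij)).mul (hG_int n).aestronglyMeasurable
  -- integrability of `Efun a * G`
  have hEGint : ∀ (a : Rd d → ℝ), Integrable a volume →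
      (∑' n : ℕ, ENNReal.ofReal (w n) *
          eLpNorm (fun x => Efun a n x * G n x) 1 volume) < ⊤ →
      ∀ n : ℕ, Integrable (fun x : Fin n → Rd d => Efun a n x * G n x) volume := by
    intro a ha htop n
    refine memLp_one_iff_integrable.mp ⟨hEGaesm a ha n, ?_⟩
    have h1 : ENNReal.ofReal (w n) *
        eLpNorm (fun x : Fin n → Rd d => Efun a n x * G n x) 1 volume < ⊤ :=
      ENNReal.lt_top_of_tsum_ne_top htop.ne n
    by_contra h
    rw [not_lt, top_le_iff] at h
    rw [h, ENNReal.mul_top (by simpa [ENNReal.ofReal_eq_zero] using (hwpos n).not_ge)] at h1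
    exact absurd h1 (lt_irrefl ⊤)
  have hMint : ∀ n, Integrable (fun x : Fin n → Rd d => Efun aminus n x * G n x) volume :=
    hEGint aminus ham_int hGEm
  have hPint : ∀ n, Integrable (fun x : Fin n → Rd d => Efun aplus n x * G n x) volume :=
    hEGint aplus hap_int hGEp
  -- integrability of single pair terms
  have hpair_int : ∀ (a : Rd d → ℝ), Integrable a volume →
      (∀ᵐ u ∂(volume : Measure (Rd d)), 0 ≤ a u) →
      ∀ n : ℕ, Integrable (fun x : Fin n → Rd d => Efun a n x * G n x) volume →
      ∀ i j : Fin n, i ≠ j →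
      Integrable (fun x : Fin n → Rd d => a (x i - x j) * G n x) volume := by
    intro a ha hpos n hEG i j hij
    have haesm : AEStronglyMeasurable (fun x : Fin n → Rd d => a (x i - x j) * G n x) volume :=
      (ha.aestronglyMeasurable.comp_quasiMeasurePreserving (Stmt6Aux.qmp_sub_eval hij)).mul
        (hG_int n).aestronglyMeasurable
    refine hEG.mono haesm ?_
    filter_upwards [htrans (fun u => 0 ≤ a u) hpos n, hG_pos n] with x hx hGx
    have h1 : 0 ≤ a (x i - x j) := hx i j hij
    have hE0 : 0 ≤ Efun a n x :=
      Finset.sum_nonneg fun i' _ => Finset.sum_nonneg fun j' hj' =>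
        hx i' j' (fun h => (Finset.mem_erase.1 hj').1 h.symm)
    have h2 : a (x i - x j) ≤ Efun a n x := by
      rw [Efun]
      have hinner : a (x i - x j) ≤ ∑ j' ∈ Finset.univ.erase i, a (x i - x j') := by
        refine Finset.single_le_sum (f := fun j' => a (x i - x j'))
          (fun j' hj' => hx i j' (fun h => (Finset.mem_erase.1 hj').1 h.symm)) ?_
        exact Finset.mem_erase.2 ⟨Ne.symm hij, Finset.mem_univ j⟩
      refine le_trans hinner ?_
      refine Finset.single_le_sum (f := fun i' => ∑ j' ∈ Finset.univ.erase i', a (x i' - x j'))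
        (fun i' _ => Finset.sum_nonneg fun j' hj' =>
          hx i' j' (fun h => (Finset.mem_erase.1 hj').1 h.symm)) (Finset.mem_univ i)
    rw [Real.norm_eq_abs, Real.norm_eq_abs, abs_of_nonneg (mul_nonneg h1 hGx),
      abs_of_nonneg (mul_nonneg hE0 hGx)]
    exact mul_le_mul_of_nonneg_right h2 hGx
  -- pair exchange via symmetry
  have hswap : ∀ (a : Rd d → ℝ) (N : ℕ) (i j i' j' : Fin N), i ≠ j → i' ≠ j' →
      (∫ x : Fin N → Rd d, a (x i - x j) * G N x)
        = ∫ x : Fin N → Rd d, a (x i' - x j') * G N x := by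
    intro a N i j i' j' hij hij'
    set τ1 := Equiv.swap i' i with hτ1
    have hτ1i : τ1 i' = i := Equiv.swap_apply_left _ _
    have hj2 : τ1 j' ≠ i := by
      rw [← hτ1i]
      exact fun h => hij' ((τ1.injective h).symm)
    set τ2 := Equiv.swap (τ1 j') j with hτ2
    set σ := τ1.trans τ2 with hσ
    have hσi : σ i' = i := by
      show τ2 (τ1 i') = i
      rw [hτ1i]
      exact Equiv.swap_apply_of_ne_of_ne (Ne.symm hj2) hij
    have hσj : σ j' = j := by
      show τ2 (τ1 j') = j
      exact Equiv.swap_apply_left _ _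
    have h := Stmt6Aux.perm_integral (d := d) σ (fun x => a (x i' - x j') * G N x)
    rw [← h]
    refine integral_congr_ae (Eventually.of_forall fun x => ?_)
    show a (x i - x j) * G N x = a (x (σ i') - x (σ j')) * G N (x ∘ σ)
    rw [hσi, hσj, hG_symm N σ x]
  -- nonnegativity facts
  have hMGnn : ∀ n, ∀ᵐ x ∂(volume : Measure (Fin n → Rd d)),
      0 ≤ Efun aminus n x * G n x := by
    intro n
    filter_upwards [htrans (fun u => 0 ≤ aminus u) ham_pos n, hG_pos n] with x hx hGx
    refine mul_nonneg (Finset.sum_nonneg fun i _ => Finset.sum_nonneg fun j hj => ?_) hGx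
    exact hx i j (fun h => (Finset.mem_erase.1 hj).1 h.symm)
  have hPGnn : ∀ n, ∀ᵐ x ∂(volume : Measure (Fin n → Rd d)),
      0 ≤ Efun aplus n x * G n x := by
    intro n
    filter_upwards [htrans (fun u => 0 ≤ aplus u) hap_pos n, hG_pos n] with x hx hGx
    refine mul_nonneg (Finset.sum_nonneg fun i _ => Finset.sum_nonneg fun j hj => ?_) hGx
    exact hx i j (fun h => (Finset.mem_erase.1 hj).1 h.symm)
  set M : ℕ → ℝ := fun n => ∫ x : Fin n → Rd d, Efun aminus n x * G n x with hM
  set P : ℕ → ℝ := fun n => ∫ x : Fin n → Rd d, Efun aplus n x * G n x with hP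
  have hMnn : ∀ n, 0 ≤ M n := fun n => integral_nonneg_of_ae (hMGnn n)
  have hPnn : ∀ n, 0 ≤ P n := fun n => integral_nonneg_of_ae (hPGnn n)
  -- domination `P n ≤ θ * M n`
  have hPleM : ∀ n, P n ≤ θ * M n := by
    intro n
    have hθM : θ * M n = ∫ x : Fin n → Rd d, θ * (Efun aminus n x * G n x) := by
      rw [integral_const_mul]
    rw [hθM]
    refine integral_mono_ae (hPint n) ((hMint n).const_mul θ) ?_
    filter_upwards [htrans (fun u => aplus u ≤ θ * aminus u) hdom n, hG_pos n] with x hx hGx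
    have hE : Efun aplus n x ≤ θ * Efun aminus n x := by
      rw [Efun, Efun, Finset.mul_sum]
      refine Finset.sum_le_sum fun i _ => ?_
      rw [Finset.mul_sum]
      refine Finset.sum_le_sum fun j hj => ?_
      exact hx i j (fun h => (Finset.mem_erase.1 hj).1 h.symm)
    calc Efun aplus n x * G n x ≤ (θ * Efun aminus n x) * G n x :=
          mul_le_mul_of_nonneg_right hE hGx
      _ = θ * (Efun aminus n x * G n x) := by ring
  -- A1 part
  have hA1fun : ∀ n, (fun x : Fin n → Rd d => A1hat m ε aminus G n x)
      = fun x => (-(m * n)) * G n x + (-ε) * (Efun aminus n x * G n x) := by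
    intro n
    funext x
    simp only [A1hat]
    ring
  have hA1_int : ∀ n, Integrable (fun x : Fin n → Rd d => A1hat m ε aminus G n x) volume := by
    intro n
    rw [hA1fun n]
    exact ((hG_int n).const_mul _).add ((hMint n).const_mul _)
  have hA1_le : ∀ n, (∫ x : Fin n → Rd d, A1hat m ε aminus G n x) ≤ -ε * M n := by
    intro n
    have heq : (∫ x : Fin n → Rd d, A1hat m ε aminus G n x)
        = (-(m * n)) * (∫ x : Fin n → Rd d, G n x) + (-ε) * M n := by
      rw [hA1fun n, integral_add ((hG_int n).const_mul _) ((hMint n).const_mul _),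
        integral_const_mul, integral_const_mul]
    rw [heq]
    have hG0 : 0 ≤ ∫ x : Fin n → Rd d, G n x := integral_nonneg_of_ae (hG_pos n)
    nlinarith [mul_nonneg (mul_nonneg hm (Nat.cast_nonneg n)) hG0]
  -- A2 part
  have hA2 : ∀ n : ℕ, Integrable (fun x : Fin n → Rd d => A2hat ε aplus G n x) volume ∧
      (∫ x : Fin n → Rd d, A2hat ε aplus G n x) = ε * ((n : ℝ) + 1)⁻¹ * P (n + 1) := by
    intro n
    set e := MeasurableEquiv.piFinSuccAbove (fun _ : Fin (n+1) => Rd d) (Fin.last n) with he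
    have hemp : MeasurePreserving e volume volume :=
      volume_preserving_piFinSuccAbove (fun _ : Fin (n+1) => Rd d) (Fin.last n)
    set F : (Fin (n+1) → Rd d) → ℝ :=
      fun z => ∑ i : Fin n, aplus (z (Fin.last n) - z i.castSucc) * G (n+1) z with hF
    have hpint : ∀ i : Fin n, Integrable
        (fun z : Fin (n+1) → Rd d => aplus (z (Fin.last n) - z i.castSucc) * G (n+1) z)
        volume := fun i =>
      hpair_int aplus hap_int hap_pos (n+1) (hPint (n+1)) _ _ (Fin.castSucc_lt_last i).ne'
    have hFint : Integrable F volume := by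
      rw [hF]
      exact integrable_finset_sum _ fun i _ => hpint i
    have hcomp : Integrable (fun q : Rd d × (Fin n → Rd d) => F (e.symm q)) volume := by
      have h := (hemp.symm).integrable_comp_emb e.symm.measurableEmbedding (g := F)
      exact h.2 hFint
    have hsnoc : ∀ (x : Fin n → Rd d) (y : Rd d), e.symm (y, x) = Fin.snoc x y := by
      intro x y
      show Fin.insertNth (α := fun _ => Rd d) (Fin.last n) y x = Fin.snoc x y
      exact Fin.insertNth_last' y x
    have hA2x : (fun x : Fin n → Rd d => A2hat ε aplus G n x)
        = fun x => ε * ∫ y : Rd d, F (e.symm (y, x)) := by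
      funext x
      rw [A2hat]
      congr 1
      refine integral_congr_ae (Eventually.of_forall fun y => ?_)
      show (∑ i : Fin n, aplus (y - x i)) * G (n + 1) (Fin.snoc x y) = F (e.symm (y, x))
      rw [hsnoc x y, hF]
      simp [Fin.snoc_last, Fin.snoc_castSucc, Finset.sum_mul]
    have hA2_int : Integrable (fun x : Fin n → Rd d => A2hat ε aplus G n x) volume := by
      rw [hA2x]
      exact (hcomp.integral_prod_right).const_mul ε
    have hIx : (∫ x : Fin n → Rd d, A2hat ε aplus G n x)
        = ε * ∫ z : Fin (n+1) → Rd d, F z := by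
      rw [hA2x, integral_const_mul]
      congr 1
      have h2 : (∫ q : Rd d × (Fin n → Rd d), F (e.symm q)) = ∫ z : Fin (n+1) → Rd d, F z :=
        (hemp.symm).integral_comp' F
      have h3 : (∫ q : Rd d × (Fin n → Rd d), F (e.symm q))
          = ∫ x : Fin n → Rd d, ∫ y : Rd d, F (e.symm (y, x)) :=
        integral_prod_symm _ hcomp
      rw [← h3, h2]
    refine ⟨hA2_int, ?_⟩
    rcases Nat.eq_zero_or_pos n with hn | hn
    · subst hn
      have hF0 : F = fun _ => (0 : ℝ) := by
        funext z
        rw [hF]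
        simp
      have hP1 : P 1 = 0 := by
        have : (fun x : Fin 1 → Rd d => Efun aplus 1 x * G 1 x) = fun _ => (0 : ℝ) := by
          funext x
          simp [Efun]
        simp only [hP, this, integral_zero]
      rw [hIx, hF0, hP1]
      simp
    · have hi0 : (0 : ℕ) < n := hn
      have hne0 : Fin.last n ≠ Fin.castSucc (⟨0, hi0⟩ : Fin n) :=
        (Fin.castSucc_lt_last ⟨0, hi0⟩).ne'
      set c : ℝ := ∫ z : Fin (n+1) → Rd d,
        aplus (z (Fin.last n) - z (Fin.castSucc ⟨0, hi0⟩)) * G (n+1) z with hc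
      have hFc : (∫ z : Fin (n+1) → Rd d, F z) = (n : ℝ) * c := by
        rw [hF, integral_finset_sum _ fun i _ => hpint i]
        rw [Finset.sum_congr rfl fun i _ =>
          hswap aplus (n+1) (Fin.last n) i.castSucc (Fin.last n) (Fin.castSucc ⟨0, hi0⟩)
            (Fin.castSucc_lt_last i).ne' hne0]
        rw [Finset.sum_const, Finset.card_univ, Fintype.card_fin, nsmul_eq_mul, ← hc]
      have hPc : P (n+1) = ((n : ℝ) + 1) * ((n : ℝ) * c) := by
        have hre : (fun z : Fin (n+1) → Rd d => Efun aplus (n+1) z * G (n+1) z)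
            = fun z => ∑ i : Fin (n+1), ∑ j ∈ Finset.univ.erase i,
                aplus (z i - z j) * G (n+1) z := by
          funext z
          rw [Efun, Finset.sum_mul]
          exact Finset.sum_congr rfl fun i _ => Finset.sum_mul _ _ _
        have hint_ij : ∀ i : Fin (n+1), ∀ j ∈ Finset.univ.erase i, Integrable
            (fun z : Fin (n+1) → Rd d => aplus (z i - z j) * G (n+1) z) volume :=
          fun i j hj => hpair_int aplus hap_int hap_pos (n+1) (hPint (n+1)) i j
            (fun h => (Finset.mem_erase.1 hj).1 h.symm)
        have : P (n+1) = ∑ i : Fin (n+1), ∑ j ∈ Finset.univ.erase i,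
            ∫ z : Fin (n+1) → Rd d, aplus (z i - z j) * G (n+1) z := by
          rw [hP]
          simp only
          rw [hre, integral_finset_sum _ fun i _ => integrable_finset_sum _ (hint_ij i)]
          exact Finset.sum_congr rfl fun i _ => integral_finset_sum _ (hint_ij i)
        rw [this]
        rw [Finset.sum_congr rfl fun i hi => Finset.sum_congr rfl fun j hj =>
          hswap aplus (n+1) i j (Fin.last n) (Fin.castSucc ⟨0, hi0⟩)
            (fun h => (Finset.mem_erase.1 hj).1 h.symm) hne0]
        have hconst : ∀ i : Fin (n+1), (∑ _j ∈ Finset.univ.erase i,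
            ∫ z : Fin (n+1) → Rd d,
              aplus (z (Fin.last n) - z (Fin.castSucc ⟨0, hi0⟩)) * G (n+1) z) = (n : ℝ) * c := by
          intro i
          rw [Finset.sum_const, Finset.card_erase_of_mem (Finset.mem_univ i), Finset.card_univ,
            Fintype.card_fin, Nat.add_sub_cancel, nsmul_eq_mul, ← hc]
        rw [Finset.sum_congr rfl fun i _ => hconst i, Finset.sum_const, Finset.card_univ,
          Fintype.card_fin, nsmul_eq_mul]
        push_cast
        ring
      rw [hIx, hFc, hPc]
      have hne : ((n : ℝ) + 1) ≠ 0 := by positivity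
      field_simp
  -- per-n inequality
  have hIneq : ∀ n : ℕ, (∫ x : Fin n → Rd d,
      (A1hat m ε aminus G n x + κ⁻¹ * A2hat ε aplus G n x))
      ≤ -ε * M n + κ⁻¹ * (ε * ((n : ℝ) + 1)⁻¹ * P (n + 1)) := by
    intro n
    rw [integral_add (hA1_int n) (((hA2 n).1).const_mul κ⁻¹), integral_const_mul, (hA2 n).2]
    exact add_le_add_left (hA1_le n) _
  -- summability
  have hnormM : ∀ n, M n ≤ (eLpNorm
      (fun x : Fin n → Rd d => Efun aminus n x * G n x) 1 volume).toReal := by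
    intro n
    have h2 : ENNReal.ofReal (∫ x : Fin n → Rd d, ‖Efun aminus n x * G n x‖)
        = eLpNorm (fun x : Fin n → Rd d => Efun aminus n x * G n x) 1 volume := by
      rw [eLpNorm_one_eq_lintegral_enorm]
      exact ofReal_integral_norm_eq_lintegral_enorm (hMint n)
    rw [← h2, ENNReal.toReal_ofReal (integral_nonneg fun x => norm_nonneg _)]
    refine le_trans ?_ (norm_integral_le_integral_norm _)
    rw [Real.norm_eq_abs]
    exact le_abs_self _
  have hnormP : ∀ n, P n ≤ (eLpNorm
      (fun x : Fin n → Rd d => Efun aplus n x * G n x) 1 volume).toReal := by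
    intro n
    have h2 : ENNReal.ofReal (∫ x : Fin n → Rd d, ‖Efun aplus n x * G n x‖)
        = eLpNorm (fun x : Fin n → Rd d => Efun aplus n x * G n x) 1 volume := by
      rw [eLpNorm_one_eq_lintegral_enorm]
      exact ofReal_integral_norm_eq_lintegral_enorm (hPint n)
    rw [← h2, ENNReal.toReal_ofReal (integral_nonneg fun x => norm_nonneg _)]
    refine le_trans ?_ (norm_integral_le_integral_norm _)
    rw [Real.norm_eq_abs]
    exact le_abs_self _
  have hsumM : Summable (fun n => w n * M n) := by
    have h1 : Summable (fun n => ((ENNReal.ofReal (w n)) * eLpNorm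
        (fun x : Fin n → Rd d => Efun aminus n x * G n x) 1 volume).toReal) :=
      ENNReal.summable_toReal hGEm.ne
    refine Summable.of_nonneg_of_le (fun n => mul_nonneg (hwpos n).le (hMnn n)) (fun n => ?_) h1
    rw [ENNReal.toReal_mul, ENNReal.toReal_ofReal (hwpos n).le]
    exact mul_le_mul_of_nonneg_left (hnormM n) (hwpos n).le
  have hsumP : Summable (fun n => w n * P n) := by
    have h1 : Summable (fun n => ((ENNReal.ofReal (w n)) * eLpNorm
        (fun x : Fin n → Rd d => Efun aplus n x * G n x) 1 volume).toReal) :=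
      ENNReal.summable_toReal hGEp.ne
    refine Summable.of_nonneg_of_le (fun n => mul_nonneg (hwpos n).le (hPnn n)) (fun n => ?_) h1
    rw [ENNReal.toReal_mul, ENNReal.toReal_ofReal (hwpos n).le]
    exact mul_le_mul_of_nonneg_left (hnormP n) (hwpos n).le
  -- weight shift identity
  have hshift : ∀ n : ℕ, w n * ((n : ℝ) + 1)⁻¹ = Real.exp α * w (n+1) := by
    intro n
    have hcast : (-(((n : ℕ) + 1 : ℕ) : ℝ)) * α = -(n : ℝ) * α + (-α) := by
      push_cast
      ring
    simp only [hw]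
    rw [hcast, Real.exp_add, Nat.factorial_succ, Real.exp_neg]
    have h1 : Real.exp α ≠ 0 := Real.exp_ne_zero α
    have h2 : ((n.factorial : ℝ)) ≠ 0 := by exact_mod_cast (Nat.factorial_pos n).ne'
    have h3 : ((n : ℝ) + 1) ≠ 0 := by positivity
    push_cast
    field_simp
  -- conclude
  by_cases hsT : Summable (fun n => w n * ∫ x : Fin n → Rd d,
      (A1hat m ε aminus G n x + κ⁻¹ * A2hat ε aplus G n x))
  · set B : ℕ → ℝ := fun n =>
      -ε * (w n * M n) + (κ⁻¹ * ε * Real.exp α) * (w (n+1) * P (n+1)) with hB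
    have hsShift : Summable (fun n => w (n+1) * P (n+1)) := (summable_nat_add_iff 1).2 hsumP
    have hsB : Summable B := (hsumM.mul_left (-ε)).add (hsShift.mul_left _)
    have hTB : ∀ n, w n * (∫ x : Fin n → Rd d,
        (A1hat m ε aminus G n x + κ⁻¹ * A2hat ε aplus G n x)) ≤ B n := by
      intro n
      calc w n * (∫ x : Fin n → Rd d,
          (A1hat m ε aminus G n x + κ⁻¹ * A2hat ε aplus G n x))
          ≤ w n * (-ε * M n + κ⁻¹ * (ε * ((n : ℝ) + 1)⁻¹ * P (n + 1))) :=
            mul_le_mul_of_nonneg_left (hIneq n) (hwpos n).le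
        _ = B n := by
            simp only [hB]
            linear_combination (κ⁻¹ * ε * P (n+1)) * hshift n
    have hle := Summable.tsum_le_tsum hTB hsT hsB
    refine le_trans hle ?_
    have h1 : ∑' n, B n = -ε * (∑' n, w n * M n)
        + (κ⁻¹ * ε * Real.exp α) * (∑' n, w (n+1) * P (n+1)) := by
      simp only [hB]
      rw [Summable.tsum_add (hsumM.mul_left (-ε)) (hsShift.mul_left _), tsum_mul_left, tsum_mul_left]
    have hP0 : P 0 = 0 := by
      have hz : (fun x : Fin 0 → Rd d => Efun aplus 0 x * G 0 x) = fun _ => (0 : ℝ) := by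
        funext x
        simp [Efun]
      simp only [hP, hz, integral_zero]
    have h2 : (∑' n, w (n+1) * P (n+1)) = ∑' n, w n * P n := by
      have h3 := Summable.tsum_eq_zero_add hsumP
      rw [hP0, mul_zero, zero_add] at h3
      exact h3.symm
    rw [h1, h2]
    have hSM : 0 ≤ ∑' n, w n * M n :=
      tsum_nonneg fun n => mul_nonneg (hwpos n).le (hMnn n)
    have hSP0 : 0 ≤ ∑' n, w n * P n :=
      tsum_nonneg fun n => mul_nonneg (hwpos n).le (hPnn n)
    have hSP : (∑' n, w n * P n) ≤ θ * (∑' n, w n * M n) := by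
      rw [← tsum_mul_left]
      refine Summable.tsum_le_tsum (fun n => ?_) hsumP (hsumM.mul_left θ)
      calc w n * P n ≤ w n * (θ * M n) := mul_le_mul_of_nonneg_left (hPleM n) (hwpos n).le
        _ = θ * (w n * M n) := by ring
    have hcoef : κ⁻¹ * (Real.exp α * θ) ≤ 1 := by
      calc κ⁻¹ * (Real.exp α * θ) ≤ κ⁻¹ * κ :=
            mul_le_mul_of_nonneg_left hκθ (inv_nonneg.2 hκ0.le)
        _ = 1 := inv_mul_cancel₀ hκ0.ne'
    have hfin : (κ⁻¹ * ε * Real.exp α) * (∑' n, w n * P n)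
        ≤ ε * (∑' n, w n * M n) := by
      calc (κ⁻¹ * ε * Real.exp α) * (∑' n, w n * P n)
          ≤ (κ⁻¹ * ε * Real.exp α) * (θ * (∑' n, w n * M n)) :=
            mul_le_mul_of_nonneg_left hSP
              (by positivity)
        _ = (κ⁻¹ * (Real.exp α * θ)) * (ε * (∑' n, w n * M n)) := by ring
        _ ≤ 1 * (ε * (∑' n, w n * M n)) :=
            mul_le_mul_of_nonneg_right hcoef (mul_nonneg hε0.le hSM)
        _ = ε * (∑' n, w n * M n) := one_mul _
    linarith [hfin]
  · rw [tsum_eq_zero_of_not_summable hsT]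
end
end

section
/- Let (ρ_s)_{s∈[0,t]} be a classical solution of the kinetic equation with ρ₀ ∈ L∞(ℝ^d), ρ₀ ≥ 0 a.e., and ρ_s ≥ 0 a.e. for all s ∈ [0,t]. Then for every s ∈ [0,t], ‖ρ_s‖_{L∞(ℝ^d)} ≤ ‖ρ₀‖_{L∞(ℝ^d)} exp(−s(m − ⟨a⁺⟩)). -/
open MeasureTheory Filter Set Topology
open scoped ENNReal

noncomputable section

/-- the convolution `(a ∗ ρ)(x) = ∫ a(x−y) ρ(y) dy` -/
def conv {d : ℕ} (a ρ : Rd d → ℝ) (x : Rd d) : ℝ := ∫ y : Rd d, a (x - y) * ρ y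

/-- the right-hand side of the kinetic equation:
`−m ρ − (a⁻ ∗ ρ) ρ + (a⁺ ∗ ρ)`. -/
def KRHS {d : ℕ} (m : ℝ) (ap am : Rd d → ℝ) (ρ : Rd d → ℝ) : Rd d → ℝ :=
  fun x => -m * ρ x - conv am ρ x * ρ x + conv ap ρ x

/-- classical solution of the kinetic equation on the time set `I`, continuously
differentiable with respect to the `L∞`-norm. -/
structure KinSol {d : ℕ} (m : ℝ) (ap am : Rd d → ℝ) (I : Set ℝ)
    (ρ0 : Rd d → ℝ) (ρ : ℝ → Rd d → ℝ) : Prop where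
  init : ρ 0 =ᵐ[volume] ρ0
  meas : ∀ t ∈ I, AEStronglyMeasurable (ρ t) volume
  bdd : ∀ t ∈ I, eLpNorm (ρ t) ⊤ volume < ⊤
  hasDeriv : ∀ t ∈ I,
    Tendsto (fun h : ℝ =>
        eLpNorm (ρ (t + h) - ρ t - h • KRHS m ap am (ρ t)) ⊤ volume /
          ENNReal.ofReal |h|)
      (𝓝[{h : ℝ | h ≠ 0 ∧ t + h ∈ I}] 0) (𝓝 0)
  contDeriv : ∀ t ∈ I,
    Tendsto (fun s : ℝ =>
        eLpNorm (KRHS m ap am (ρ s) - KRHS m ap am (ρ t)) ⊤ volume)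
      (𝓝[I] t) (𝓝 0)

section Aux

variable {d : ℕ}

lemma ae_norm_le_top (f : Rd d → ℝ) (hf : eLpNorm f ⊤ volume < ⊤) :
    ∀ᵐ x ∂(volume : Measure (Rd d)), ‖f x‖ ≤ (eLpNorm f ⊤ volume).toReal := by
  rw [eLpNorm_exponent_top] at hf
  filter_upwards [ae_le_eLpNormEssSup (f := f) (μ := (volume : Measure (Rd d)))] with x hx
  have h1 : (‖f x‖₊ : ℝ≥0∞).toReal ≤ (eLpNormEssSup f volume).toReal :=
    ENNReal.toReal_mono hf.ne (by exact_mod_cast hx)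
  simpa [eLpNorm_exponent_top] using h1

lemma conv_aesm (a g : Rd d → ℝ) (ha : AEStronglyMeasurable a volume)
    (hg : AEStronglyMeasurable g volume) :
    AEStronglyMeasurable (conv a g) volume := by
  have h := (hg.convolution_integrand ((ContinuousLinearMap.mul ℝ ℝ).flip)
      ha (μ := (volume : Measure (Rd d))) (ν := (volume : Measure (Rd d))))
  have h2 : AEStronglyMeasurable
      (fun p : Rd d × Rd d => a (p.1 - p.2) * g p.2) ((volume : Measure (Rd d)).prod volume) := by
    simpa [mul_comm] using h
  exact h2.integral_prod_right'

lemma conv_nonneg_pt (a g : Rd d → ℝ) (ha_pos : ∀ᵐ x ∂(volume : Measure (Rd d)), 0 ≤ a x)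
    (hg_pos : ∀ᵐ x ∂(volume : Measure (Rd d)), 0 ≤ g x) (x : Rd d) :
    0 ≤ conv a g x := by
  refine integral_nonneg_of_ae ?_
  have h1 : ∀ᵐ y ∂(volume : Measure (Rd d)), 0 ≤ a (x - y) :=
    (Measure.measurePreserving_sub_left volume x).quasiMeasurePreserving.ae ha_pos
  filter_upwards [h1, hg_pos] with y h1 h2
  exact mul_nonneg h1 h2

lemma conv_le_pt (a g : Rd d → ℝ) (ha_int : Integrable a volume)
    (ha_pos : ∀ᵐ x ∂(volume : Measure (Rd d)), 0 ≤ a x)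
    (hg_pos : ∀ᵐ x ∂(volume : Measure (Rd d)), 0 ≤ g x)
    (N : ℝ) (hN : ∀ᵐ y ∂(volume : Measure (Rd d)), g y ≤ N) (x : Rd d) :
    conv a g x ≤ (∫ y, a y) * N := by
  have h1 : ∀ᵐ y ∂(volume : Measure (Rd d)), 0 ≤ a (x - y) :=
    (Measure.measurePreserving_sub_left volume x).quasiMeasurePreserving.ae ha_pos
  have hint : Integrable (fun y => a (x - y) * N) volume :=
    (ha_int.comp_sub_left x).mul_const N
  have h2 : conv a g x ≤ ∫ y, a (x - y) * N := by
    refine integral_mono_of_nonneg ?_ hint ?_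
    · filter_upwards [h1, hg_pos] with y hy hy2
      exact mul_nonneg hy hy2
    · filter_upwards [h1, hN] with y hy hy2
      exact mul_le_mul_of_nonneg_left hy2 hy
  calc conv a g x ≤ ∫ y, a (x - y) * N := h2
    _ = (∫ y, a (x - y)) * N := by rw [integral_mul_const]
    _ = (∫ y, a y) * N := by rw [integral_sub_left_eq_self a volume x]

lemma eLpNorm_top_le_of_ae_bound {f : Rd d → ℝ} {C : ℝ}
    (h : ∀ᵐ x ∂(volume : Measure (Rd d)), ‖f x‖ ≤ C) :
    eLpNorm f ⊤ volume ≤ ENNReal.ofReal C := by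
  have := eLpNorm_le_of_ae_bound (p := (⊤ : ℝ≥0∞)) (μ := (volume : Measure (Rd d))) h
  simpa using this

end Aux

set_option maxHeartbeats 2000000 in
theorem statement9
    (d : ℕ) (hd : 1 ≤ d) (m : ℝ) (hm : 0 ≤ m)
    (aplus aminus : Rd d → ℝ)
    (hap_int : Integrable aplus volume) (ham_int : Integrable aminus volume)
    (hap_bdd : eLpNorm aplus ⊤ volume < ⊤) (ham_bdd : eLpNorm aminus ⊤ volume < ⊤)
    (hap_even : ∀ᵐ x ∂volume, aplus (-x) = aplus x)
    (ham_even : ∀ᵐ x ∂volume, aminus (-x) = aminus x)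
    (hap_pos : ∀ᵐ x ∂volume, 0 ≤ aplus x)
    (ham_pos : ∀ᵐ x ∂volume, 0 ≤ aminus x)
    (t : ℝ) (ht : 0 ≤ t)
    (ρ0 : Rd d → ℝ) (hρ0_meas : AEStronglyMeasurable ρ0 volume)
    (hρ0_bdd : eLpNorm ρ0 ⊤ volume < ⊤)
    (hρ0_pos : ∀ᵐ x ∂volume, 0 ≤ ρ0 x)
    (ρ : ℝ → Rd d → ℝ)
    (hρ : KinSol m aplus aminus (Set.Icc 0 t) ρ0 ρ)
    (hρ_pos : ∀ s ∈ Set.Icc (0 : ℝ) t, ∀ᵐ x ∂volume, 0 ≤ ρ s x) :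
    ∀ s ∈ Set.Icc (0 : ℝ) t,
      eLpNorm (ρ s) ⊤ volume ≤
        eLpNorm ρ0 ⊤ volume *
          ENNReal.ofReal (Real.exp (-s * (m - ∫ x, aplus x))) := by
  set A := ∫ x, aplus x with hA
  have hA0 : 0 ≤ A := integral_nonneg_of_ae hap_pos
  set Am := ∫ x, aminus x with hAm
  have hAm0 : 0 ≤ Am := integral_nonneg_of_ae ham_pos
  set K : ℝ := A - m with hK
  set F : ℝ → ℝ := fun u => (eLpNorm (ρ u) ⊤ volume).toReal with hF
  have hF0 : ∀ u, 0 ≤ F u := fun u => ENNReal.toReal_nonneg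
  have hbd : ∀ u ∈ Set.Icc (0 : ℝ) t,
      ∀ᵐ x ∂(volume : Measure (Rd d)), 0 ≤ ρ u x ∧ ρ u x ≤ F u := by
    intro u hu
    filter_upwards [hρ_pos u hu, ae_norm_le_top (ρ u) (hρ.bdd u hu)] with x h1 h2
    exact ⟨h1, le_trans (le_abs_self _) (by rw [Real.norm_eq_abs] at h2; exact h2)⟩
  clear_value A Am K F
  have hconvm : ∀ u ∈ Set.Icc (0 : ℝ) t, ∀ x,
      0 ≤ conv aminus (ρ u) x ∧ conv aminus (ρ u) x ≤ Am * F u := by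
    intro u hu x
    refine ⟨conv_nonneg_pt _ _ ham_pos (hρ_pos u hu) x, ?_⟩
    rw [hAm]
    exact conv_le_pt _ _ ham_int ham_pos (hρ_pos u hu) (F u)
      ((hbd u hu).mono fun x h => h.2) x
  have hconvp : ∀ u ∈ Set.Icc (0 : ℝ) t, ∀ x,
      0 ≤ conv aplus (ρ u) x ∧ conv aplus (ρ u) x ≤ A * F u := by
    intro u hu x
    refine ⟨conv_nonneg_pt _ _ hap_pos (hρ_pos u hu) x, ?_⟩
    rw [hA]
    exact conv_le_pt _ _ hap_int hap_pos (hρ_pos u hu) (F u)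
      ((hbd u hu).mono fun x h => h.2) x
  have hKa : ∀ u ∈ Set.Icc (0 : ℝ) t,
      AEStronglyMeasurable (KRHS m aplus aminus (ρ u)) volume := by
    intro u hu
    exact (((hρ.meas u hu).const_mul (-m)).sub
        ((conv_aesm _ _ ham_int.aestronglyMeasurable (hρ.meas u hu)).mul (hρ.meas u hu))).add
      (conv_aesm _ _ hap_int.aestronglyMeasurable (hρ.meas u hu))
  have hKb : ∀ u ∈ Set.Icc (0 : ℝ) t,
      eLpNorm (KRHS m aplus aminus (ρ u)) ⊤ volume ≤
        ENNReal.ofReal (m * F u + Am * F u * F u + A * F u) := by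
    intro u hu
    refine eLpNorm_top_le_of_ae_bound ?_
    filter_upwards [hbd u hu] with x hx
    have hc := hconvm u hu x
    have hp := hconvp u hu x
    rw [KRHS, Real.norm_eq_abs, abs_le]
    constructor
    · nlinarith [mul_le_mul hc.2 hx.2 hx.1 (by nlinarith [hF0 u] : (0:ℝ) ≤ Am * F u),
        mul_nonneg hc.1 hx.1, mul_le_mul_of_nonneg_right hx.2 hm]
    · nlinarith [mul_le_mul hc.2 hx.2 hx.1 (by nlinarith [hF0 u] : (0:ℝ) ≤ Am * F u),
        mul_nonneg hc.1 hx.1, mul_le_mul_of_nonneg_right hx.2 hm, hp.1, hp.2,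
        mul_nonneg hm hx.1]
  have hstep : ∀ u ∈ Set.Icc (0 : ℝ) t, ∀ h : ℝ, 0 < h → h * (m + Am * F u) ≤ 1 →
      eLpNorm (ρ u + h • KRHS m aplus aminus (ρ u)) ⊤ volume ≤
        ENNReal.ofReal ((1 + h * K) * F u) := by
    intro u hu h hpos hsmall
    refine eLpNorm_top_le_of_ae_bound ?_
    filter_upwards [hbd u hu] with x hx
    have hc := hconvm u hu x
    have hp := hconvp u hu x
    have hval : (ρ u + h • KRHS m aplus aminus (ρ u)) x
        = ρ u x + h * (-m * ρ u x - conv aminus (ρ u) x * ρ u x + conv aplus (ρ u) x) := by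
      simp [KRHS, Pi.add_apply, Pi.smul_apply, smul_eq_mul]
    have hexp : h * (m + Am * F u) = h * m + h * (Am * F u) := by ring
    have hAmF : 0 ≤ h * (Am * F u) := mul_nonneg hpos.le (mul_nonneg hAm0 (hF0 u))
    have hhA : 0 ≤ h * A := mul_nonneg hpos.le hA0
    have hhc : h * conv aminus (ρ u) x ≤ h * (Am * F u) :=
      mul_le_mul_of_nonneg_left hc.2 hpos.le
    have h1m : 0 ≤ 1 - h * m - h * conv aminus (ρ u) x := by linarith
    have h1K : 0 ≤ 1 + h * (A - m) := by nlinarith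
    rw [hval, Real.norm_eq_abs, hK, abs_le]
    have h2 : ρ u x * (1 - h * m) ≤ F u * (1 - h * m) := by
      apply mul_le_mul_of_nonneg_right hx.2
      linarith
    have h3 : h * conv aplus (ρ u) x ≤ h * (A * F u) :=
      mul_le_mul_of_nonneg_left hp.2 hpos.le
    have h4 : 0 ≤ h * conv aminus (ρ u) x * ρ u x :=
      mul_nonneg (mul_nonneg hpos.le hc.1) hx.1
    constructor
    · have hlow : 0 ≤ ρ u x * (1 - h * m - h * conv aminus (ρ u) x) +
          h * conv aplus (ρ u) x :=
        add_nonneg (mul_nonneg hx.1 h1m) (mul_nonneg hpos.le hp.1)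
      have hub : 0 ≤ (1 + h * (A - m)) * F u := mul_nonneg h1K (hF0 u)
      nlinarith [hlow, hub]
    · nlinarith [h2, h3, h4]
  -- continuity of F on Icc 0 t
  have hcont : ContinuousOn F (Set.Icc 0 t) := by
    intro u hu
    have hKau := hKa u hu
    set Bu := m * F u + Am * F u * F u + A * F u with hBu
    have hgz : Tendsto (fun z => eLpNorm (ρ z - ρ u) ⊤ volume) (𝓝[Set.Icc 0 t] u) (𝓝 0) := by
      have hsub : Tendsto (fun z : ℝ => z - u) (𝓝[Set.Icc 0 t \ {u}] u)
          (𝓝[{h : ℝ | h ≠ 0 ∧ u + h ∈ Set.Icc 0 t}] 0) := by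
        rw [tendsto_nhdsWithin_iff]
        constructor
        · have : Tendsto (fun z : ℝ => z - u) (𝓝 u) (𝓝 (u - u)) :=
            (continuous_id.sub continuous_const).tendsto u
          simpa using this.mono_left nhdsWithin_le_nhds
        · filter_upwards [self_mem_nhdsWithin] with z hz
          refine ⟨sub_ne_zero.mpr hz.2, ?_⟩
          rw [show u + (z - u) = z by ring]
          exact hz.1
      have hQ := hρ.hasDeriv u hu
      have h1 : ∀ᶠ h in 𝓝[{h : ℝ | h ≠ 0 ∧ u + h ∈ Set.Icc 0 t}] 0,
          eLpNorm (ρ (u + h) - ρ u) ⊤ volume ≤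
            ENNReal.ofReal |h| * (1 + ENNReal.ofReal Bu) := by
        filter_upwards [hQ.eventually (gt_mem_nhds (zero_lt_one : (0:ℝ≥0∞) < 1)),
          self_mem_nhdsWithin] with h hq hmem
        have hofr : ENNReal.ofReal |h| ≠ 0 :=
          (ENNReal.ofReal_pos.mpr (abs_pos.mpr hmem.1)).ne'
        have hR : eLpNorm (ρ (u + h) - ρ u - h • KRHS m aplus aminus (ρ u)) ⊤ volume ≤
            ENNReal.ofReal |h| := by
          have h' := hq.le
          rw [ENNReal.div_le_iff hofr ENNReal.ofReal_ne_top] at h'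
          simpa using h'
        have hmeas1 : AEStronglyMeasurable
            (ρ (u + h) - ρ u - h • KRHS m aplus aminus (ρ u)) volume :=
          ((hρ.meas _ hmem.2).sub (hρ.meas u hu)).sub (hKau.const_smul h)
        have htri : eLpNorm (ρ (u + h) - ρ u) ⊤ volume ≤
            eLpNorm (ρ (u + h) - ρ u - h • KRHS m aplus aminus (ρ u)) ⊤ volume +
              eLpNorm (h • KRHS m aplus aminus (ρ u)) ⊤ volume := by
          have heq : ρ (u + h) - ρ u =
              (ρ (u + h) - ρ u - h • KRHS m aplus aminus (ρ u)) +
                h • KRHS m aplus aminus (ρ u) :=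
            (sub_add_cancel _ _).symm
          conv_lhs => rw [heq]
          exact eLpNorm_add_le hmeas1 (hKau.const_smul h) le_top
        have hsm : eLpNorm (h • KRHS m aplus aminus (ρ u)) ⊤ volume ≤
            ENNReal.ofReal |h| * ENNReal.ofReal Bu := by
          rw [eLpNorm_const_smul, Real.enorm_eq_ofReal_abs]
          exact mul_le_mul_right (hKb u hu) _
        calc eLpNorm (ρ (u + h) - ρ u) ⊤ volume
            ≤ eLpNorm (ρ (u + h) - ρ u - h • KRHS m aplus aminus (ρ u)) ⊤ volume +
              eLpNorm (h • KRHS m aplus aminus (ρ u)) ⊤ volume := htri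
          _ ≤ ENNReal.ofReal |h| + ENNReal.ofReal |h| * ENNReal.ofReal Bu :=
              add_le_add hR hsm
          _ = ENNReal.ofReal |h| * (1 + ENNReal.ofReal Bu) := by rw [mul_add, mul_one]
      have hbound : Tendsto (fun h : ℝ => ENNReal.ofReal |h| * (1 + ENNReal.ofReal Bu))
          (𝓝[{h : ℝ | h ≠ 0 ∧ u + h ∈ Set.Icc 0 t}] 0) (𝓝 0) := by
        have habs : Tendsto (fun h : ℝ => ENNReal.ofReal |h|) (𝓝 0) (𝓝 0) := by
          have := (ENNReal.continuous_ofReal.comp continuous_abs).tendsto 0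
          simpa [Function.comp_def] using this
        have := (ENNReal.Tendsto.mul_const habs
          (Or.inr (by finiteness : (1 + ENNReal.ofReal Bu) ≠ ⊤)))
        simpa using this.mono_left nhdsWithin_le_nhds
      have h2 : Tendsto (fun h : ℝ => eLpNorm (ρ (u + h) - ρ u) ⊤ volume)
          (𝓝[{h : ℝ | h ≠ 0 ∧ u + h ∈ Set.Icc 0 t}] 0) (𝓝 0) :=
        tendsto_of_tendsto_of_tendsto_of_le_of_le' tendsto_const_nhds hbound
          (Eventually.of_forall fun _ => zero_le) h1
      have h3 : Tendsto (fun z => eLpNorm (ρ z - ρ u) ⊤ volume)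
          (𝓝[Set.Icc 0 t \ {u}] u) (𝓝 0) := by
        have hcomp := h2.comp hsub
        refine hcomp.congr fun z => ?_
        show eLpNorm (ρ (u + (z - u)) - ρ u) ⊤ volume = _
        rw [show u + (z - u) = z by ring]
      have h4 : Tendsto (fun z => eLpNorm (ρ z - ρ u) ⊤ volume) (𝓝[{u}] u) (𝓝 0) := by
        rw [nhdsWithin_singleton]
        have : eLpNorm (ρ u - ρ u) ⊤ (volume : Measure (Rd d)) = 0 := by
          rw [sub_self]; exact eLpNorm_zero
        simpa [this] using tendsto_pure_nhds (fun z => eLpNorm (ρ z - ρ u) ⊤ volume) u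
      have h5 : 𝓝[Set.Icc 0 t] u ≤ 𝓝[Set.Icc 0 t \ {u}] u ⊔ 𝓝[{u}] u := by
        rw [← nhdsWithin_union]
        refine nhdsWithin_mono _ fun z hz => ?_
        by_cases h : z = u
        · exact Or.inr (by simp [h])
        · exact Or.inl ⟨hz, h⟩
      exact (tendsto_sup.mpr ⟨h3, h4⟩).mono_left h5
    have hgz' : Tendsto (fun z => (eLpNorm (ρ z - ρ u) ⊤ volume).toReal)
        (𝓝[Set.Icc 0 t] u) (𝓝 0) := by
      have := (ENNReal.tendsto_toReal (by simp : (0:ℝ≥0∞) ≠ ⊤)).comp hgz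
      simpa [Function.comp_def] using this
    rw [ContinuousWithinAt, tendsto_iff_dist_tendsto_zero]
    refine squeeze_zero' (Eventually.of_forall fun z => dist_nonneg) ?_ hgz'
    filter_upwards [self_mem_nhdsWithin] with z hz
    have hfin : eLpNorm (ρ z - ρ u) ⊤ volume ≠ ⊤ := by
      refine ((eLpNorm_sub_le (hρ.meas z hz) (hρ.meas u hu) le_top).trans_lt ?_).ne
      exact ENNReal.add_lt_top.mpr ⟨hρ.bdd z hz, hρ.bdd u hu⟩
    have e1 : F z ≤ F u + (eLpNorm (ρ z - ρ u) ⊤ volume).toReal := by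
      rw [hF]
      have hz1 : eLpNorm (ρ z) ⊤ volume ≤
          eLpNorm (ρ u) ⊤ volume + eLpNorm (ρ z - ρ u) ⊤ volume := by
        conv_lhs => rw [show ρ z = ρ u + (ρ z - ρ u) from (add_sub_cancel _ _).symm]
        exact eLpNorm_add_le (hρ.meas u hu) ((hρ.meas z hz).sub (hρ.meas u hu)) le_top
      have := ENNReal.toReal_mono
        (ENNReal.add_ne_top.mpr ⟨(hρ.bdd u hu).ne, hfin⟩) hz1
      rwa [ENNReal.toReal_add (hρ.bdd u hu).ne hfin] at this
    have e2 : F u ≤ F z + (eLpNorm (ρ z - ρ u) ⊤ volume).toReal := by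
      rw [hF]
      have hz2 : eLpNorm (ρ u) ⊤ volume ≤
          eLpNorm (ρ z) ⊤ volume + eLpNorm (ρ z - ρ u) ⊤ volume := by
        conv_lhs => rw [show ρ u = ρ z + -(ρ z - ρ u) from by
          rw [← sub_eq_add_neg]; exact (sub_sub_cancel _ _).symm]
        refine (eLpNorm_add_le (hρ.meas z hz)
          (((hρ.meas z hz).sub (hρ.meas u hu)).neg) le_top).trans ?_
        rw [eLpNorm_neg]
      have := ENNReal.toReal_mono
        (ENNReal.add_ne_top.mpr ⟨(hρ.bdd z hz).ne, hfin⟩) hz2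
      rwa [ENNReal.toReal_add (hρ.bdd z hz).ne hfin] at this
    rw [Real.dist_eq, abs_le]
    constructor <;> linarith
  -- Dini derivative condition
  have hdini : ∀ x ∈ Set.Ico (0 : ℝ) t, ∀ r, K * F x < r →
      ∃ᶠ z in 𝓝[>] x, (z - x)⁻¹ * (F z - F x) < r := by
    intro x hx r hr
    have hxI : x ∈ Set.Icc (0 : ℝ) t := ⟨hx.1, hx.2.le⟩
    have hxt : 0 < t - x := sub_pos.mpr hx.2
    obtain ⟨ε, hε⟩ : ∃ ε : ℝ, ε = (r - K * F x) / 2 := ⟨_, rfl⟩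
    have hεpos : 0 < ε := by rw [hε]; linarith
    obtain ⟨c, hc⟩ : ∃ c : ℝ, c = m + Am * F x := ⟨_, rfl⟩
    have hc0 : 0 ≤ c := by
      have := mul_nonneg hAm0 (hF0 x)
      rw [hc]; linarith
    obtain ⟨h₁, hh₁⟩ : ∃ h₁ : ℝ, h₁ = (1 + c)⁻¹ := ⟨_, rfl⟩
    have hh₁pos : 0 < h₁ := by rw [hh₁]; positivity
    set l : Filter ℝ := 𝓝[Set.Ioc 0 (t - x)] 0 with hl
    have hlne : l.NeBot := by
      refine mem_closure_iff_nhdsWithin_neBot.mp ?_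
      rw [closure_Ioc hxt.ne]
      exact ⟨le_refl 0, hxt.le⟩
    have hlS : l ≤ 𝓝[{h : ℝ | h ≠ 0 ∧ x + h ∈ Set.Icc 0 t}] 0 := by
      refine nhdsWithin_mono _ fun h hh => ?_
      exact ⟨hh.1.ne', ⟨by linarith [hx.1, hh.1], by linarith [hh.2]⟩⟩
    have hev : ∀ᶠ h : ℝ in l, (x + h - x)⁻¹ * (F (x + h) - F x) < r := by
      have hev1 : ∀ᶠ h : ℝ in l,
          eLpNorm (ρ (x + h) - ρ x - h • KRHS m aplus aminus (ρ x)) ⊤ volume /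
            ENNReal.ofReal |h| < ENNReal.ofReal ε :=
        ((hρ.hasDeriv x hxI).eventually
          (gt_mem_nhds (ENNReal.ofReal_pos.mpr hεpos))).filter_mono hlS
      have hev2 : ∀ᶠ h : ℝ in l, h < h₁ :=
        (eventually_lt_nhds hh₁pos).filter_mono nhdsWithin_le_nhds
      filter_upwards [hev1, hev2, self_mem_nhdsWithin] with h hq hlt hmem
      have hpos : (0:ℝ) < h := hmem.1
      have hxhI : x + h ∈ Set.Icc (0:ℝ) t := ⟨by linarith [hx.1], by linarith [hmem.2]⟩
      have hsmall : h * (m + Am * F x) ≤ 1 := by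
        rw [← hc]
        have h5 : h * c ≤ h₁ * c := mul_le_mul_of_nonneg_right hlt.le hc0
        have h6 : h₁ * c ≤ 1 := by
          rw [hh₁, inv_mul_le_iff₀ (by linarith)]
          linarith
        linarith
      have hAmF : 0 ≤ h * (Am * F x) := mul_nonneg hpos.le (mul_nonneg hAm0 (hF0 x))
      have hhA : 0 ≤ h * A := mul_nonneg hpos.le hA0
      have eK : h * K = h * A - h * m := by rw [hK]; ring
      have hexp : h * (m + Am * F x) = h * m + h * (Am * F x) := by ring
      have h1K : 0 ≤ 1 + h * K := by linarith
      -- remainder bound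
      have hofr : ENNReal.ofReal |h| ≠ 0 :=
        (ENNReal.ofReal_pos.mpr (abs_pos.mpr hpos.ne')).ne'
      have hR : eLpNorm (ρ (x + h) - ρ x - h • KRHS m aplus aminus (ρ x)) ⊤ volume ≤
          ENNReal.ofReal (ε * h) := by
        have h' := hq.le
        rw [ENNReal.div_le_iff hofr ENNReal.ofReal_ne_top] at h'
        rw [abs_of_pos hpos] at h'
        rw [← ENNReal.ofReal_mul hεpos.le] at h'
        exact h'
      have hstep' := hstep x hxI h hpos hsmall
      have hmeas1 : AEStronglyMeasurable
          (ρ (x + h) - ρ x - h • KRHS m aplus aminus (ρ x)) volume :=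
        ((hρ.meas _ hxhI).sub (hρ.meas x hxI)).sub ((hKa x hxI).const_smul h)
      have hmeas2 : AEStronglyMeasurable
          (ρ x + h • KRHS m aplus aminus (ρ x)) volume :=
        (hρ.meas x hxI).add ((hKa x hxI).const_smul h)
      have htri : eLpNorm (ρ (x + h)) ⊤ volume ≤
          eLpNorm (ρ x + h • KRHS m aplus aminus (ρ x)) ⊤ volume +
            eLpNorm (ρ (x + h) - ρ x - h • KRHS m aplus aminus (ρ x)) ⊤ volume := by
        conv_lhs => rw [show ρ (x + h) = (ρ x + h • KRHS m aplus aminus (ρ x)) +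
          (ρ (x + h) - ρ x - h • KRHS m aplus aminus (ρ x)) from by
            rw [sub_sub, add_comm (ρ x), add_sub_cancel]]
        exact eLpNorm_add_le hmeas2 hmeas1 le_top
      have hC1 : 0 ≤ (1 + h * K) * F x := mul_nonneg h1K (hF0 x)
      have hC2 : 0 ≤ ε * h := mul_nonneg hεpos.le hpos.le
      have hcomb : eLpNorm (ρ (x + h)) ⊤ volume ≤
          ENNReal.ofReal ((1 + h * K) * F x + ε * h) := by
        refine htri.trans ((add_le_add hstep' hR).trans ?_)
        rw [← ENNReal.ofReal_add hC1 hC2]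
      have hFxh : F (x + h) ≤ (1 + h * K) * F x + ε * h := by
        have hFeq : F (x + h) = (eLpNorm (ρ (x + h)) ⊤ volume).toReal := by rw [hF]
        rw [hFeq]
        exact ENNReal.toReal_le_of_le_ofReal (add_nonneg hC1 hC2) hcomb
      rw [show x + h - x = h by ring]
      rw [inv_mul_lt_iff₀ hpos]
      have hKFr : K * F x + ε < r := by rw [hε]; linarith
      have hmul := mul_lt_mul_of_pos_left hKFr hpos
      have eKF : h * K * F x = h * (K * F x) := by ring
      nlinarith [hFxh, hmul]
    -- transfer along the map h ↦ x + h
    have hmap : Tendsto (fun h : ℝ => x + h) l (𝓝[>] x) := by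
      rw [tendsto_nhdsWithin_iff]
      constructor
      · have : Tendsto (fun h : ℝ => x + h) (𝓝 0) (𝓝 (x + 0)) :=
          (continuous_const.add continuous_id).tendsto 0
        simpa using this.mono_left nhdsWithin_le_nhds
      · filter_upwards [self_mem_nhdsWithin] with h hh
        exact by simpa using hh.1
    exact hmap.frequently hev.frequently
  -- apply Gronwall
  have hgron := le_gronwallBound_of_liminf_deriv_right_le (f' := fun x => K * F x)
    (δ := F 0) (K := K) (ε := 0)
    hcont hdini (le_refl (F 0)) (fun x hx => by simp)
  intro s hs
  have hFs := hgron s hs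
  rw [gronwallBound_ε0] at hFs
  have e0 : eLpNorm (ρ 0) ⊤ volume = eLpNorm ρ0 ⊤ volume := eLpNorm_congr_ae hρ.init
  have h0I : (0:ℝ) ∈ Set.Icc (0:ℝ) t := ⟨le_refl 0, ht⟩
  have eρs : eLpNorm (ρ s) ⊤ volume = ENNReal.ofReal (F s) := by
    rw [hF]
    exact (ENNReal.ofReal_toReal (hρ.bdd s hs).ne).symm
  have eρ0 : eLpNorm ρ0 ⊤ volume = ENNReal.ofReal (F 0) := by
    rw [← e0, hF]
    exact (ENNReal.ofReal_toReal (hρ.bdd 0 h0I).ne).symm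
  rw [eρs, eρ0, ← ENNReal.ofReal_mul (hF0 0)]
  apply ENNReal.ofReal_le_ofReal
  calc F s ≤ F 0 * Real.exp (K * (s - 0)) := hFs
    _ = F 0 * Real.exp (-s * (m - A)) := by
        rw [show K * (s - 0) = -s * (m - A) by rw [hK]; ring]
end
end

section
/- Let T > 0, b > 0, and assume m + ε₀ > 0 where ε₀ = max(⟨a⁺⟩ − m, 0). Let ρ₀ ∈ L∞(ℝ^d) satisfy 0 ≤ ρ₀ ≤ b a.e., and let u: [0,T] → L∞(ℝ^d) be continuous with u_t ≥ 0 a.e. and ‖u_t‖_{L∞} ≤ b for all t ∈ [0,T]. Then for every t ∈ [0,T], ‖F(u)_t‖_{L∞} ≤ ‖ρ₀‖_{L∞} e^{−t(m+ε₀)} + b (⟨a⁺⟩/(m+ε₀)) (1 − e^{−t(m+ε₀)}) ≤ b; in particular F maps the set of nonnegative continuous curves bounded by b into itself. -/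
open MeasureTheory Filter Set Topology
open scoped ENNReal

noncomputable section

lemma ae_abs_le_of_eLpNormTop_le {d : ℕ} {f : Rd d → ℝ} {b : ℝ} (hb : 0 ≤ b)
    (h : eLpNorm f ⊤ volume ≤ ENNReal.ofReal b) :
    ∀ᵐ y ∂(volume : Measure (Rd d)), |f y| ≤ b := by
  filter_upwards [ae_le_eLpNormEssSup (f := f) (μ := volume)] with y hy
  have h2 : (‖f y‖₊ : ℝ≥0∞) ≤ ENNReal.ofReal b := by
    refine hy.trans ?_
    rwa [eLpNorm_exponent_top] at h
  rw [← ENNReal.ofReal_coe_nnreal, coe_nnnorm] at h2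
  have := (ENNReal.ofReal_le_ofReal_iff hb).mp h2
  simpa [Real.norm_eq_abs] using this

lemma conv_nonneg' {d : ℕ} {a ρ : Rd d → ℝ}
    (ha : ∀ᵐ x ∂(volume : Measure (Rd d)), 0 ≤ a x)
    (hρ : ∀ᵐ x ∂(volume : Measure (Rd d)), 0 ≤ ρ x) (x : Rd d) : 0 ≤ conv a ρ x := by
  refine integral_nonneg_of_ae ?_
  have ha' : ∀ᵐ y ∂(volume : Measure (Rd d)), 0 ≤ a (x - y) :=
    ((Measure.measurePreserving_sub_left volume x).quasiMeasurePreserving).ae ha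
  filter_upwards [ha', hρ] with y h1 h2 using mul_nonneg h1 h2

lemma conv_le' {d : ℕ} {a ρ : Rd d → ℝ} {b : ℝ}
    (ha_int : Integrable a (volume : Measure (Rd d)))
    (ha : ∀ᵐ x ∂(volume : Measure (Rd d)), 0 ≤ a x)
    (hρ : ∀ᵐ x ∂(volume : Measure (Rd d)), 0 ≤ ρ x)
    (hρb : ∀ᵐ x ∂(volume : Measure (Rd d)), |ρ x| ≤ b) (x : Rd d) :
    conv a ρ x ≤ b * ∫ z, a z := by
  have ha' : ∀ᵐ y ∂(volume : Measure (Rd d)), 0 ≤ a (x - y) :=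
    ((Measure.measurePreserving_sub_left volume x).quasiMeasurePreserving).ae ha
  have hint : Integrable (fun y => a (x - y) * b) (volume : Measure (Rd d)) :=
    (ha_int.comp_sub_left x).mul_const b
  have hle : (fun y => a (x - y) * ρ y) ≤ᵐ[(volume : Measure (Rd d))] fun y => a (x - y) * b := by
    filter_upwards [ha', hρ, hρb] with y h1 _ h3
    exact mul_le_mul_of_nonneg_left (le_of_abs_le h3) h1
  have hf0 : 0 ≤ᵐ[(volume : Measure (Rd d))] fun y => a (x - y) * ρ y := by
    filter_upwards [ha', hρ] with y h1 h2 using mul_nonneg h1 h2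
  calc conv a ρ x ≤ ∫ y, a (x - y) * b := integral_mono_of_nonneg hf0 hint hle
    _ = (∫ y, a (x - y)) * b := by rw [integral_mul_const]
    _ = b * ∫ z, a z := by rw [integral_sub_left_eq_self a volume x]; ring

lemma integral_exp_decay {c t : ℝ} (hc : 0 < c) (ht : 0 ≤ t) :
    ∫ τ in Set.Ioc (0:ℝ) t, Real.exp (-c * (t - τ)) = (1 - Real.exp (-t * c)) / c := by
  rw [← intervalIntegral.integral_of_le ht]
  have h1 : ∀ τ : ℝ, Real.exp (-c * (t - τ)) = Real.exp (c * τ) * Real.exp (-t * c) := by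
    intro τ; rw [← Real.exp_add]; ring_nf
  simp_rw [h1]
  rw [intervalIntegral.integral_mul_const,
    intervalIntegral.integral_comp_mul_left (fun x => Real.exp x) hc.ne', mul_zero, integral_exp,
    Real.exp_zero, smul_eq_mul]
  have hE : Real.exp (-t * c) = (Real.exp (c * t))⁻¹ := by
    rw [← Real.exp_neg]; ring_nf
  rw [hE]
  have hEpos : (0:ℝ) < Real.exp (c * t) := Real.exp_pos _
  field_simp

/-- the fixed-point map `F` from the proof of Theorem 3.1 (eq. (26)):
`(F(u)_t)(x) = ρ₀(x) exp(−(m+ε₀)t − ∫₀^t e^{ε₀τ}(a⁻ ∗ u_τ)(x) dτ)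
 + ∫₀^t (a⁺ ∗ u_τ)(x) exp(−(m+ε₀)(t−τ) − ∫_τ^t e^{ε₀ s}(a⁻ ∗ u_s)(x) ds) dτ`. -/
def Fmap {d : ℕ} (m eps0 : ℝ) (ap am : Rd d → ℝ) (ρ0 : Rd d → ℝ)
    (u : ℝ → Rd d → ℝ) (t : ℝ) (x : Rd d) : ℝ :=
  ρ0 x * Real.exp (-(m + eps0) * t -
      ∫ τ in Set.Ioc (0 : ℝ) t, Real.exp (eps0 * τ) * conv am (u τ) x)
    + ∫ τ in Set.Ioc (0 : ℝ) t, conv ap (u τ) x *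
        Real.exp (-(m + eps0) * (t - τ) -
          ∫ s in Set.Ioc τ t, Real.exp (eps0 * s) * conv am (u s) x)

theorem statement10
    (d : ℕ) (hd : 1 ≤ d) (m : ℝ) (hm : 0 ≤ m)
    (aplus aminus : Rd d → ℝ)
    (hap_int : Integrable aplus volume) (ham_int : Integrable aminus volume)
    (hap_bdd : eLpNorm aplus ⊤ volume < ⊤) (ham_bdd : eLpNorm aminus ⊤ volume < ⊤)
    (hap_even : ∀ᵐ x ∂volume, aplus (-x) = aplus x)
    (ham_even : ∀ᵐ x ∂volume, aminus (-x) = aminus x)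
    (hap_pos : ∀ᵐ x ∂volume, 0 ≤ aplus x)
    (ham_pos : ∀ᵐ x ∂volume, 0 ≤ aminus x)
    (eps0 : ℝ) (heps0 : eps0 = max ((∫ x, aplus x) - m) 0)
    (hpos : 0 < m + eps0)
    (T : ℝ) (hT : 0 < T) (b : ℝ) (hb : 0 < b)
    (ρ0 : Rd d → ℝ) (hρ0_meas : AEStronglyMeasurable ρ0 volume)
    (hρ0_pos : ∀ᵐ x ∂volume, 0 ≤ ρ0 x)
    (hρ0_bdd : ∀ᵐ x ∂volume, ρ0 x ≤ b)
    (u : ℝ → Rd d → ℝ)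
    (hu_meas : ∀ t ∈ Set.Icc (0 : ℝ) T, AEStronglyMeasurable (u t) volume)
    (hu_pos : ∀ t ∈ Set.Icc (0 : ℝ) T, ∀ᵐ x ∂volume, 0 ≤ u t x)
    (hu_bdd : ∀ t ∈ Set.Icc (0 : ℝ) T, eLpNorm (u t) ⊤ volume ≤ ENNReal.ofReal b)
    (hu_cont : ∀ t ∈ Set.Icc (0 : ℝ) T,
      Tendsto (fun s : ℝ => eLpNorm (u s - u t) ⊤ volume) (𝓝[Set.Icc (0 : ℝ) T] t) (𝓝 0))
 :
    ∀ t ∈ Set.Icc (0 : ℝ) T,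
      eLpNorm (Fmap m eps0 aplus aminus ρ0 u t) ⊤ volume ≤
          ENNReal.ofReal ((eLpNorm ρ0 ⊤ volume).toReal * Real.exp (-t * (m + eps0)) +
            b * ((∫ x, aplus x) / (m + eps0)) * (1 - Real.exp (-t * (m + eps0)))) ∧
        (eLpNorm ρ0 ⊤ volume).toReal * Real.exp (-t * (m + eps0)) +
            b * ((∫ x, aplus x) / (m + eps0)) * (1 - Real.exp (-t * (m + eps0))) ≤ b := by
  have hI0 : 0 ≤ ∫ x, aplus x := integral_nonneg_of_ae hap_pos
  set I := ∫ x, aplus x with hIdef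
  have hIc : I ≤ m + eps0 := by
    have h := le_max_left (I - m) 0
    rw [← heps0] at h; linarith
  set c := m + eps0 with hcdef
  have hρb : ∀ᵐ x ∂(volume : Measure (Rd d)), |ρ0 x| ≤ b := by
    filter_upwards [hρ0_pos, hρ0_bdd] with x h1 h2
    rw [abs_of_nonneg h1]; exact h2
  have hρtop : eLpNorm ρ0 ⊤ volume ≤ ENNReal.ofReal b := by
    rw [eLpNorm_exponent_top]
    exact eLpNormEssSup_le_of_ae_bound (by simpa [Real.norm_eq_abs] using hρb)
  set A := (eLpNorm ρ0 ⊤ volume).toReal with hAdef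
  have hA0 : 0 ≤ A := ENNReal.toReal_nonneg
  have hAb : A ≤ b := by
    have h := ENNReal.toReal_mono (by simp : ENNReal.ofReal b ≠ ⊤) hρtop
    rwa [ENNReal.toReal_ofReal hb.le] at h
  have hρA : ∀ᵐ x ∂(volume : Measure (Rd d)), |ρ0 x| ≤ A := by
    have hfin : eLpNormEssSup ρ0 (volume : Measure (Rd d)) ≠ ⊤ := by
      rw [← eLpNorm_exponent_top]
      exact (hρtop.trans_lt ENNReal.ofReal_lt_top).ne
    filter_upwards [ae_le_eLpNormEssSup (f := ρ0) (μ := (volume : Measure (Rd d)))] with x hx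
    have h := ENNReal.toReal_mono hfin hx
    simpa [hAdef, eLpNorm_exponent_top, Real.norm_eq_abs] using h
  intro t ht
  obtain ⟨ht0, htT⟩ := ht
  have hconv_am : ∀ τ ∈ Set.Icc (0:ℝ) T, ∀ x, 0 ≤ conv aminus (u τ) x :=
    fun τ hτ x => conv_nonneg' ham_pos (hu_pos τ hτ) x
  have hconv_ap0 : ∀ τ ∈ Set.Icc (0:ℝ) T, ∀ x, 0 ≤ conv aplus (u τ) x :=
    fun τ hτ x => conv_nonneg' hap_pos (hu_pos τ hτ) x
  have hconv_ap : ∀ τ ∈ Set.Icc (0:ℝ) T, ∀ x, conv aplus (u τ) x ≤ b * I :=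
    fun τ hτ x => conv_le' hap_int hap_pos (hu_pos τ hτ)
      (ae_abs_le_of_eLpNormTop_le hb.le (hu_bdd τ hτ)) x
  set e := Real.exp (-t * c) with he_def
  have he0 : 0 < e := Real.exp_pos _
  have he1 : e ≤ 1 := by
    rw [he_def]
    refine Real.exp_le_one_iff.mpr ?_
    nlinarith
  constructor
  · rw [eLpNorm_exponent_top]
    refine eLpNormEssSup_le_of_ae_bound ?_
    filter_upwards [hρ0_pos, hρA] with x hx1 hx2
    set I1 := ∫ τ in Set.Ioc (0:ℝ) t, Real.exp (eps0 * τ) * conv aminus (u τ) x with hI1def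
    have hI1_0 : 0 ≤ I1 := setIntegral_nonneg measurableSet_Ioc (fun τ hτ =>
      mul_nonneg (Real.exp_pos _).le (hconv_am τ ⟨hτ.1.le, hτ.2.trans htT⟩ x))
    have hterm1 : ρ0 x * Real.exp (-c * t - I1) ≤ A * e := by
      have hexp : Real.exp (-c * t - I1) ≤ e := by
        rw [he_def]
        apply Real.exp_le_exp.mpr
        have : -c * t = -t * c := by ring
        linarith
      exact mul_le_mul ((abs_le.mp hx2).2) hexp (Real.exp_pos _).le hA0
    have hterm2 : (∫ τ in Set.Ioc (0:ℝ) t, conv aplus (u τ) x *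
        Real.exp (-c * (t - τ) -
          ∫ s in Set.Ioc τ t, Real.exp (eps0 * s) * conv aminus (u s) x)) ≤
        b * I * ((1 - e) / c) := by
      have hg0 : 0 ≤ᵐ[(volume : Measure ℝ).restrict (Set.Ioc 0 t)] fun τ =>
          conv aplus (u τ) x * Real.exp (-c * (t - τ) -
            ∫ s in Set.Ioc τ t, Real.exp (eps0 * s) * conv aminus (u s) x) := by
        filter_upwards [ae_restrict_mem measurableSet_Ioc] with τ hτ
        exact mul_nonneg (hconv_ap0 τ ⟨hτ.1.le, hτ.2.trans htT⟩ x) (Real.exp_pos _).le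
      have hh_int : IntegrableOn (fun τ => b * I * Real.exp (-c * (t - τ)))
          (Set.Ioc (0:ℝ) t) volume := by
        apply Continuous.integrableOn_Ioc
        fun_prop
      have hle : (fun τ => conv aplus (u τ) x * Real.exp (-c * (t - τ) -
            ∫ s in Set.Ioc τ t, Real.exp (eps0 * s) * conv aminus (u s) x)) ≤ᵐ[(volume : Measure ℝ).restrict (Set.Ioc 0 t)]
          fun τ => b * I * Real.exp (-c * (t - τ)) := by
        filter_upwards [ae_restrict_mem measurableSet_Ioc] with τ hτ
        have hI2 : 0 ≤ ∫ s in Set.Ioc τ t, Real.exp (eps0 * s) * conv aminus (u s) x :=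
          setIntegral_nonneg measurableSet_Ioc (fun s hs =>
            mul_nonneg (Real.exp_pos _).le
              (hconv_am s ⟨hτ.1.le.trans hs.1.le, hs.2.trans htT⟩ x))
        have hexp : Real.exp (-c * (t - τ) -
            ∫ s in Set.Ioc τ t, Real.exp (eps0 * s) * conv aminus (u s) x) ≤
            Real.exp (-c * (t - τ)) := by
          apply Real.exp_le_exp.mpr; linarith
        exact mul_le_mul (hconv_ap τ ⟨hτ.1.le, hτ.2.trans htT⟩ x) hexp (Real.exp_pos _).le
          (mul_nonneg hb.le hI0)
      calc (∫ τ in Set.Ioc (0:ℝ) t, conv aplus (u τ) x *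
            Real.exp (-c * (t - τ) -
              ∫ s in Set.Ioc τ t, Real.exp (eps0 * s) * conv aminus (u s) x))
          ≤ ∫ τ in Set.Ioc (0:ℝ) t, b * I * Real.exp (-c * (t - τ)) :=
            integral_mono_of_nonneg hg0 hh_int hle
        _ = b * I * ∫ τ in Set.Ioc (0:ℝ) t, Real.exp (-c * (t - τ)) := by
            rw [integral_const_mul]
        _ = b * I * ((1 - e) / c) := by rw [integral_exp_decay hpos ht0, he_def]
    have hF0 : 0 ≤ Fmap m eps0 aplus aminus ρ0 u t x := by
      unfold Fmap
      refine add_nonneg (mul_nonneg hx1 (Real.exp_pos _).le) ?_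
      exact setIntegral_nonneg measurableSet_Ioc (fun τ hτ =>
        mul_nonneg (hconv_ap0 τ ⟨hτ.1.le, hτ.2.trans htT⟩ x) (Real.exp_pos _).le)
    rw [Real.norm_eq_abs, abs_of_nonneg hF0]
    unfold Fmap
    have hMeq : b * (I / c) * (1 - e) = b * I * ((1 - e) / c) := by ring
    rw [hMeq]
    exact add_le_add hterm1 hterm2
  · have h1 : A * e ≤ b * e := mul_le_mul_of_nonneg_right hAb he0.le
    have h2 : I / c ≤ 1 := (div_le_one hpos).mpr hIc
    have h3 : 0 ≤ I / c := div_nonneg hI0 hpos.le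
    have h4 : b * (I / c) * (1 - e) ≤ b * (1 - e) := by
      have := mul_le_mul_of_nonneg_right (mul_le_mul_of_nonneg_left h2 hb.le)
        (sub_nonneg.mpr he1)
      simpa [mul_assoc] using this
    nlinarith
end
end
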